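/- arXiv:1409.5892 — 5 statements merged into one kernel-verified Lean document; each statement's English description precedes it below -/
import Mathlib

section
/- Let λ > 0 and let G : ℝ × ℝ → ℝ be Lipschitz continuous in both variables with λ ≤ G(t,η) ≤ 1/λ for all (t,η), and suppose G(t,η) is 1-periodic in the oscillating variable η. Fix p ∈ ℝ and T > 0. For each ε ∈ (0,1] let X^ε : [0,T] → ℝ be the solution of the initial value problem dX^ε/dt = 1/G(t, X^ε(t)/ε), X^ε(0) = p. Then there exist a Lipschitz continuous function X⁰ : [0,T] → ℝ and a constant C > 0 (independent of ε) such that sup_{t∈[0,T]} |X^ε(t) − X⁰(t)| ≤ C ε for all ε ∈ (0,1]. -/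
open Set Filter intervalIntegral Real

section Aux

variable {lam : ℝ} {L : NNReal} {G : ℝ × ℝ → ℝ}

/-- the averaged coefficient -/
noncomputable def avgG (G : ℝ × ℝ → ℝ) (t : ℝ) : ℝ := ∫ η in (0:ℝ)..1, G (t, η)

lemma absG (hlip : LipschitzWith L G) (a b η η' : ℝ) :
    |G (a, η) - G (b, η')| ≤ L * max |a - b| |η - η'| := by
  have := hlip.dist_le_mul (a, η) (b, η')
  simpa [Prod.dist_eq, Real.dist_eq] using this

lemma absG1 (hlip : LipschitzWith L G) (a b η : ℝ) :
    |G (a, η) - G (b, η)| ≤ L * |a - b| := by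
  simpa [abs_nonneg] using absG hlip a b η η

lemma contG2 (hlip : LipschitzWith L G) {f g : ℝ → ℝ} (hf : Continuous f) (hg : Continuous g) :
    Continuous fun s => G (f s, g s) := hlip.continuous.comp (hf.prodMk hg)

lemma avgG_lb (hlip : LipschitzWith L G) (hGlb : ∀ q, lam ≤ G q) (t : ℝ) :
    lam ≤ avgG G t := by
  have h := integral_mono_on (μ := MeasureTheory.volume) (f := fun _ => lam)
    (g := fun η => G (t, η)) zero_le_one (intervalIntegrable_const)
    ((contG2 hlip continuous_const continuous_id).intervalIntegrable 0 1)
    (fun x _ => hGlb (t, x))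
  simpa [avgG] using h

lemma avgG_ub (hlip : LipschitzWith L G) (hGub : ∀ q, G q ≤ 1 / lam) (t : ℝ) :
    avgG G t ≤ lam⁻¹ := by
  have h := integral_mono_on (μ := MeasureTheory.volume) (g := fun _ => lam⁻¹)
    (f := fun η => G (t, η)) zero_le_one
    ((contG2 hlip continuous_const continuous_id).intervalIntegrable 0 1)
    (intervalIntegrable_const)
    (fun x _ => by simpa [one_div] using hGub (t, x))
  simpa [avgG] using h

lemma avgG_lip (hlip : LipschitzWith L G) : LipschitzWith L (avgG G) := by
  apply LipschitzWith.of_dist_le_mul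
  intro a b
  rw [Real.dist_eq, Real.dist_eq]
  have hint : ∀ c : ℝ, IntervalIntegrable (fun η => G (c, η)) MeasureTheory.volume 0 1 :=
    fun c => (contG2 hlip continuous_const continuous_id).intervalIntegrable 0 1
  have : avgG G a - avgG G b = ∫ η in (0:ℝ)..1, (G (a, η) - G (b, η)) := by
    rw [integral_sub (hint a) (hint b)]; rfl
  rw [this]
  have h := norm_integral_le_of_norm_le_const (C := L * |a - b|)
    (f := fun η => G (a, η) - G (b, η)) (a := (0:ℝ)) (b := 1)
    (fun x _ => by simpa [Real.norm_eq_abs] using absG1 hlip a b x)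
  simpa [Real.norm_eq_abs] using h

end Aux

set_option maxHeartbeats 2000000 in
/-- Theorem 1, first part: one-dimensional homogenization of
`dX^ε/dt = 1/G(t, X^ε/ε)` with `G` Lipschitz, bounded between `λ` and `1/λ`, and
1-periodic in the oscillating variable: the solutions converge, uniformly on `[0,T]`
and with rate `O(ε)`, to a Lipschitz function `X⁰`. -/
theorem stmt_0
    (lam : ℝ) (hlam : 0 < lam)
    (G : ℝ × ℝ → ℝ)
    (hGlip : ∃ L : NNReal, LipschitzWith L G)
    (hGlb : ∀ q : ℝ × ℝ, lam ≤ G q)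
    (hGub : ∀ q : ℝ × ℝ, G q ≤ 1 / lam)
    (hGper : ∀ t η : ℝ, G (t, η + 1) = G (t, η))
    (p T : ℝ) (hT : 0 < T)
    (X : ℝ → ℝ → ℝ)
    (hXinit : ∀ ε ∈ Ioc (0:ℝ) 1, X ε 0 = p)
    (hXode : ∀ ε ∈ Ioc (0:ℝ) 1, ∀ t ∈ Icc (0:ℝ) T,
      HasDerivAt (X ε) (1 / G (t, X ε t / ε)) t) :
    ∃ (X0 : ℝ → ℝ) (K : NNReal), LipschitzOnWith K X0 (Icc (0:ℝ) T) ∧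
      ∃ C > (0:ℝ), ∀ ε ∈ Ioc (0:ℝ) 1, ∀ t ∈ Icc (0:ℝ) T,
        |X ε t - X0 t| ≤ C * ε := by
  obtain ⟨L, hlip⟩ := hGlip
  have hlaminv : (0:ℝ) < lam⁻¹ := inv_pos.mpr hlam
  set Gb : ℝ → ℝ := avgG G with hGb
  have hGbcont : Continuous Gb := (avgG_lip hlip).continuous
  have hGblb : ∀ t, lam ≤ Gb t := avgG_lb hlip hGlb
  have hGbub : ∀ t, Gb t ≤ lam⁻¹ := avgG_ub hlip hGub
  have hGbpos : ∀ t, 0 < Gb t := fun t => lt_of_lt_of_le hlam (hGblb t)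
  have hGblip : ∀ a b : ℝ, |Gb a - Gb b| ≤ L * |a - b| := by
    intro a b
    have := (avgG_lip hlip).dist_le_mul a b
    simpa [Real.dist_eq] using this
  -- bounds on (Gb x)⁻¹
  have hinvlb : ∀ t, lam ≤ (Gb t)⁻¹ := by
    intro t
    have := inv_anti₀ (hGbpos t) (hGbub t)
    simpa using this
  have hinvub : ∀ t, (Gb t)⁻¹ ≤ lam⁻¹ := fun t => inv_anti₀ hlam (hGblb t)
  have hGbinvcont : Continuous fun t => (Gb t)⁻¹ :=
    hGbcont.inv₀ (fun t => (hGbpos t).ne')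
  -- the homogenized solution
  set X0 : ℝ → ℝ := fun t => p + ∫ s in (0:ℝ)..t, (Gb s)⁻¹ with hX0
  have hX0d : ∀ t, HasDerivAt X0 (Gb t)⁻¹ t := by
    intro t
    exact ((hGbinvcont.integral_hasStrictDerivAt 0 t).hasDerivAt).const_add p
  have hX0cont : Continuous X0 := by
    have : Differentiable ℝ X0 := fun t => (hX0d t).differentiableAt
    exact this.continuous
  have hX0sub : ∀ s t : ℝ, X0 t - X0 s = ∫ x in s..t, (Gb x)⁻¹ := by
    intro s t
    have h1 : (∫ x in (0:ℝ)..s, (Gb x)⁻¹) + ∫ x in s..t, (Gb x)⁻¹ = ∫ x in (0:ℝ)..t, (Gb x)⁻¹ :=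
      integral_add_adjacent_intervals (hGbinvcont.intervalIntegrable 0 s)
        (hGbinvcont.intervalIntegrable s t)
    simp only [hX0]
    linarith [h1]
  have hX0inc : ∀ s t : ℝ, s ≤ t →
      lam * (t - s) ≤ X0 t - X0 s ∧ X0 t - X0 s ≤ lam⁻¹ * (t - s) := by
    intro s t hst
    rw [hX0sub s t]
    constructor
    · have := integral_mono_on (μ := MeasureTheory.volume) (f := fun _ => lam)
        (g := fun x => (Gb x)⁻¹) hst intervalIntegrable_const
        (hGbinvcont.intervalIntegrable s t) (fun x _ => hinvlb x)
      simpa [mul_comm] using this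
    · have := integral_mono_on (μ := MeasureTheory.volume) (g := fun _ => lam⁻¹)
        (f := fun x => (Gb x)⁻¹) hst (hGbinvcont.intervalIntegrable s t)
        intervalIntegrable_const (fun x _ => hinvub x)
      simpa [mul_comm] using this
  have hX0lip : ∀ s t : ℝ, |X0 t - X0 s| ≤ lam⁻¹ * |t - s| := by
    intro s t
    rcases le_total s t with h | h
    · have h1 := (hX0inc s t h).1
      have h2 := (hX0inc s t h).2
      have hge : (0:ℝ) ≤ X0 t - X0 s := by nlinarith [sub_nonneg.mpr h]
      rw [abs_of_nonneg hge, abs_of_nonneg (sub_nonneg.mpr h)]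
      exact h2
    · have h1 := (hX0inc t s h).1
      have h2 := (hX0inc t s h).2
      have hge : (0:ℝ) ≤ X0 s - X0 t := by nlinarith [sub_nonneg.mpr h]
      rw [abs_sub_comm (X0 t) (X0 s), abs_of_nonneg hge, abs_sub_comm t s, abs_of_nonneg (sub_nonneg.mpr h)]
      exact h2
  have hX0low : ∀ s t : ℝ, lam * |t - s| ≤ |X0 t - X0 s| := by
    intro s t
    rcases le_total s t with h | h
    · have h1 := (hX0inc s t h).1
      have hge : (0:ℝ) ≤ X0 t - X0 s := by nlinarith [sub_nonneg.mpr h]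
      rw [abs_of_nonneg hge, abs_of_nonneg (sub_nonneg.mpr h)]
      exact h1
    · have h1 := (hX0inc t s h).1
      have hge : (0:ℝ) ≤ X0 s - X0 t := by nlinarith [sub_nonneg.mpr h]
      rw [abs_sub_comm (X0 t) (X0 s), abs_of_nonneg hge, abs_sub_comm t s, abs_of_nonneg (sub_nonneg.mpr h)]
      exact h1
  have hX0inj : Function.Injective X0 := by
    intro s t hst
    by_contra hne
    have h0 : 0 < lam * |t - s| := mul_pos hlam (abs_pos.mpr (sub_ne_zero.mpr (Ne.symm hne)))
    have := hX0low s t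
    rw [hst] at this
    simp at this
    linarith
  have hX0surj : Function.Surjective X0 := by
    apply Continuous.surjective hX0cont
    · -- tendsto atTop
      apply tendsto_atTop_mono' _ _ (tendsto_atTop_add_const_left _ (X0 0)
        (Tendsto.const_mul_atTop hlam tendsto_id))
      filter_upwards [eventually_ge_atTop (0:ℝ)] with t ht
      have := (hX0inc 0 t ht).1
      simp only [id]
      linarith
    · -- tendsto atBot
      apply tendsto_atBot_mono' _ _ (tendsto_atBot_add_const_left _ (X0 0)
        (Tendsto.const_mul_atBot hlam tendsto_id))
      filter_upwards [eventually_le_atBot (0:ℝ)] with t ht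
      have := (hX0inc t 0 ht).1
      simp only [id]
      linarith
  set tau : ℝ → ℝ := Function.invFun X0 with htau
  have htauR : ∀ x, X0 (tau x) = x := fun x => Function.invFun_eq (hX0surj x)
  have htauL : ∀ t, tau (X0 t) = t := fun t => Function.leftInverse_invFun hX0inj t
  have htaulip : ∀ x y : ℝ, |tau x - tau y| ≤ lam⁻¹ * |x - y| := by
    intro x y
    have h := hX0low (tau y) (tau x)
    rw [htauR, htauR] at h
    calc |tau x - tau y| = lam⁻¹ * (lam * |tau x - tau y|) := by
          field_simp
      _ ≤ lam⁻¹ * |x - y| := mul_le_mul_of_nonneg_left h hlaminv.le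
  have htaucont : Continuous tau := by
    apply LipschitzWith.continuous (K := ⟨lam⁻¹, hlaminv.le⟩)
    apply LipschitzWith.of_dist_le_mul
    intro x y
    rw [Real.dist_eq, Real.dist_eq]; exact htaulip x y
  have htaud : ∀ x, HasDerivAt tau (Gb (tau x)) x := by
    intro x
    have h := HasDerivAt.of_local_left_inverse (htaucont.continuousAt)
      (hX0d (tau x)) (inv_ne_zero (hGbpos _).ne') (Eventually.of_forall htauR)
    simpa using h
  have hX00 : X0 0 = p := by simp [hX0]
  have htaup : tau p = 0 := by rw [← hX00, htauL]
  have hGbtau_cont : Continuous fun s => Gb (tau s) := hGbcont.comp htaucont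
  have htauint : ∀ x : ℝ, ∫ s in p..x, Gb (tau s) = tau x := by
    intro x
    rw [integral_eq_sub_of_hasDerivAt (fun s _ => htaud s)
      (hGbtau_cont.intervalIntegrable p x), htaup, sub_zero]
  -- constants
  have hLnn : (0:ℝ) ≤ L := L.coe_nonneg
  have hll : lam ≤ lam⁻¹ := le_trans (hGlb (0,0)) (by simpa [one_div] using hGub (0,0))
  set b : ℝ := p + T * lam⁻¹ with hbdef
  set C₁ : ℝ := 2 * L * lam⁻¹ * (T * lam⁻¹) + 2 * lam⁻¹ with hC₁def
  set K₀ : ℝ := L * lam⁻¹ + 1 with hK₀def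
  set C₂ : ℝ := L * lam⁻¹ * C₁ * Real.exp (K₀ * T) with hC₂def
  have hC₁0 : 0 ≤ C₁ := by rw [hC₁def]; positivity
  have hC₂0 : 0 ≤ C₂ := by rw [hC₂def]; positivity
  have hK₀1 : 1 ≤ K₀ := by
    rw [hK₀def]; nlinarith [mul_nonneg hLnn hlaminv.le]
  have hK₀pos : 0 < K₀ := lt_of_lt_of_le one_pos hK₀1
  refine ⟨X0, ⟨lam⁻¹, hlaminv.le⟩, ?_, lam⁻¹ * (C₂ + C₁) + 1, ?_, ?_⟩
  · apply LipschitzWith.lipschitzOnWith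
    apply LipschitzWith.of_dist_le_mul
    intro s t
    rw [Real.dist_eq, Real.dist_eq]; exact hX0lip t s
  · nlinarith [mul_nonneg hlaminv.le (add_nonneg hC₂0 hC₁0)]
  -- the main estimate
  intro ε hε
  have hε0 : 0 < ε := hε.1
  have hεne : ε ≠ 0 := hε0.ne'
  have hXc : ContinuousOn (X ε) (Icc 0 T) :=
    fun s hs => ((hXode ε hε s hs).continuousAt).continuousWithinAt
  have hosc_cont : Continuous fun s => G (tau s, s / ε) :=
    contG2 hlip htaucont (continuous_id.div_const ε)
  set hfun : ℝ → ℝ := fun s => G (tau s, s / ε) - Gb (tau s) with hfundef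
  have hhcont : Continuous hfun := hosc_cont.sub hGbtau_cont
  have habs2 : ∀ s, |hfun s| ≤ 2 * lam⁻¹ := by
    intro s
    have h1 := hGlb (tau s, s / ε)
    have h2 : G (tau s, s / ε) ≤ lam⁻¹ := by simpa [one_div] using hGub (tau s, s / ε)
    have h3 := hGblb (tau s)
    have h4 := hGbub (tau s)
    rw [hfundef]
    refine abs_le.mpr ⟨by dsimp only; linarith, by dsimp only; linarith⟩
  -- single period estimate
  have hosc1 : ∀ a : ℝ, |∫ s in a..a + ε, hfun s| ≤ 2 * L * lam⁻¹ * ε ^ 2 := by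
    intro a
    have hA : IntervalIntegrable (fun s => G (tau s, s / ε) - G (tau a, s / ε))
        MeasureTheory.volume a (a + ε) :=
      ((contG2 hlip htaucont (continuous_id.div_const ε)).sub
        (contG2 hlip continuous_const (continuous_id.div_const ε))).intervalIntegrable _ _
    have hB : IntervalIntegrable (fun s => Gb (tau s) - Gb (tau a))
        MeasureTheory.volume a (a + ε) :=
      (hGbtau_cont.sub continuous_const).intervalIntegrable _ _
    have hC : IntervalIntegrable (fun s => G (tau a, s / ε) - Gb (tau a))
        MeasureTheory.volume a (a + ε) :=
      ((contG2 hlip continuous_const (continuous_id.div_const ε)).sub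
        continuous_const).intervalIntegrable _ _
    have hsplit : ∫ s in a..a + ε, hfun s =
        ((∫ s in a..a + ε, (G (tau s, s / ε) - G (tau a, s / ε))) -
          ∫ s in a..a + ε, (Gb (tau s) - Gb (tau a))) +
          ∫ s in a..a + ε, (G (tau a, s / ε) - Gb (tau a)) := by
      rw [← integral_sub hA hB, ← integral_add (hA.sub hB) hC]
      apply integral_congr
      intro s _
      rw [hfundef]
      ring
    have hIC : (∫ s in a..a + ε, (G (tau a, s / ε) - Gb (tau a))) = 0 := by
      have hper : Function.Periodic (fun η => G (tau a, η)) 1 := fun η => hGper (tau a) η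
      have h1 : (∫ s in a..a + ε, G (tau a, s / ε)) = ε * Gb (tau a) := by
        have h2 : (a + ε) / ε = a / ε + 1 := by field_simp
        calc (∫ s in a..a + ε, G (tau a, s / ε))
            = ε • ∫ η in a / ε..(a + ε) / ε, G (tau a, η) :=
              integral_comp_div (a := a) (b := a + ε) (c := ε) (fun η => G (tau a, η)) hεne
          _ = ε • ∫ η in a / ε..a / ε + 1, G (tau a, η) := by rw [h2]
          _ = ε • ∫ η in (0:ℝ)..0 + 1, G (tau a, η) := by
              rw [hper.intervalIntegral_add_eq (a / ε) 0]
          _ = ε * Gb (tau a) := by rw [zero_add, smul_eq_mul]; rfl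
      have hGint : IntervalIntegrable (fun s => G (tau a, s / ε))
          MeasureTheory.volume a (a + ε) :=
        (contG2 hlip continuous_const (continuous_id.div_const ε)).intervalIntegrable _ _
      rw [integral_sub hGint intervalIntegrable_const, h1]
      simp
    have hIA : |∫ s in a..a + ε, (G (tau s, s / ε) - G (tau a, s / ε))| ≤ (L * lam⁻¹ * ε) * ε := by
      have h := norm_integral_le_of_norm_le_const (C := L * lam⁻¹ * ε)
        (f := fun s => G (tau s, s / ε) - G (tau a, s / ε)) (a := a) (b := a + ε) ?_
      · rw [Real.norm_eq_abs] at h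
        calc |∫ s in a..a + ε, (G (tau s, s / ε) - G (tau a, s / ε))|
            ≤ L * lam⁻¹ * ε * |a + ε - a| := h
          _ = L * lam⁻¹ * ε * ε := by rw [add_sub_cancel_left, abs_of_pos hε0]
      · intro x hx
        rw [uIoc_of_le (by linarith)] at hx
        have hxa : |x - a| ≤ ε := by
          rw [abs_of_pos (by linarith [hx.1])]
          linarith [hx.2]
        have h1 : |tau x - tau a| ≤ lam⁻¹ * ε := by
          calc |tau x - tau a| ≤ lam⁻¹ * |x - a| := htaulip x a
            _ ≤ lam⁻¹ * ε := by nlinarith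
        rw [Real.norm_eq_abs]
        calc |G (tau x, x / ε) - G (tau a, x / ε)| ≤ L * |tau x - tau a| := absG1 hlip _ _ _
          _ ≤ L * (lam⁻¹ * ε) := by nlinarith
          _ = L * lam⁻¹ * ε := by ring
    have hIB : |∫ s in a..a + ε, (Gb (tau s) - Gb (tau a))| ≤ (L * lam⁻¹ * ε) * ε := by
      have h := norm_integral_le_of_norm_le_const (C := L * lam⁻¹ * ε)
        (f := fun s => Gb (tau s) - Gb (tau a)) (a := a) (b := a + ε) ?_
      · rw [Real.norm_eq_abs] at h
        calc |∫ s in a..a + ε, (Gb (tau s) - Gb (tau a))|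
            ≤ L * lam⁻¹ * ε * |a + ε - a| := h
          _ = L * lam⁻¹ * ε * ε := by rw [add_sub_cancel_left, abs_of_pos hε0]
      · intro x hx
        rw [uIoc_of_le (by linarith)] at hx
        have hxa : |x - a| ≤ ε := by
          rw [abs_of_pos (by linarith [hx.1])]
          linarith [hx.2]
        have h1 : |tau x - tau a| ≤ lam⁻¹ * ε := by
          calc |tau x - tau a| ≤ lam⁻¹ * |x - a| := htaulip x a
            _ ≤ lam⁻¹ * ε := by nlinarith
        rw [Real.norm_eq_abs]
        calc |Gb (tau x) - Gb (tau a)| ≤ L * |tau x - tau a| := hGblip _ _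
          _ ≤ L * (lam⁻¹ * ε) := by nlinarith
          _ = L * lam⁻¹ * ε := by ring
    rw [hsplit, hIC, add_zero]
    calc |(∫ s in a..a + ε, (G (tau s, s / ε) - G (tau a, s / ε))) -
          ∫ s in a..a + ε, (Gb (tau s) - Gb (tau a))|
        ≤ |∫ s in a..a + ε, (G (tau s, s / ε) - G (tau a, s / ε))| +
          |∫ s in a..a + ε, (Gb (tau s) - Gb (tau a))| := abs_sub _ _
      _ ≤ (L * lam⁻¹ * ε) * ε + (L * lam⁻¹ * ε) * ε := add_le_add hIA hIB
      _ = 2 * L * lam⁻¹ * ε ^ 2 := by ring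
  -- grid estimate
  have hgrid : ∀ n : ℕ, |∫ s in p..p + n * ε, hfun s| ≤ n * (2 * L * lam⁻¹ * ε ^ 2) := by
    intro n
    induction n with
    | zero => simp
    | succ n ih =>
      have hadj := integral_add_adjacent_intervals (μ := MeasureTheory.volume)
        (hhcont.intervalIntegrable p (p + n * ε))
        (hhcont.intervalIntegrable (p + n * ε) (p + n * ε + ε))
      have heq : p + ((n:ℝ) + 1) * ε = p + n * ε + ε := by ring
      push_cast
      rw [heq, ← hadj]
      calc |(∫ s in p..p + n * ε, hfun s) + ∫ s in p + n * ε..p + n * ε + ε, hfun s|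
          ≤ |∫ s in p..p + n * ε, hfun s| + |∫ s in p + n * ε..p + n * ε + ε, hfun s| :=
            abs_add_le _ _
        _ ≤ n * (2 * L * lam⁻¹ * ε ^ 2) + 2 * L * lam⁻¹ * ε ^ 2 :=
            add_le_add ih (hosc1 _)
        _ = ((n:ℝ) + 1) * (2 * L * lam⁻¹ * ε ^ 2) := by ring
  -- full oscillation estimate
  have hosc : ∀ x ∈ Icc p b, |∫ s in p..x, hfun s| ≤ C₁ * ε := by
    intro x hx
    set n : ℕ := ⌊(x - p) / ε⌋₊ with hndef
    have hxp : 0 ≤ x - p := by linarith [hx.1]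
    have hn1 : (n:ℝ) * ε ≤ x - p := by
      have h := Nat.floor_le (div_nonneg hxp hε0.le)
      have := mul_le_mul_of_nonneg_right h hε0.le
      rwa [div_mul_cancel₀ _ hεne] at this
    have hn2 : x - p < ((n:ℝ) + 1) * ε := by
      have h := Nat.lt_floor_add_one ((x - p) / ε)
      have := mul_lt_mul_of_pos_right h hε0
      rwa [div_mul_cancel₀ _ hεne] at this
    have hadj := integral_add_adjacent_intervals (μ := MeasureTheory.volume)
      (hhcont.intervalIntegrable p (p + n * ε)) (hhcont.intervalIntegrable (p + n * ε) x)
    have htail : |∫ s in p + n * ε..x, hfun s| ≤ 2 * lam⁻¹ * ε := by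
      have h := norm_integral_le_of_norm_le_const (C := 2 * lam⁻¹)
        (f := hfun) (a := p + n * ε) (b := x)
        (fun s _ => by rw [Real.norm_eq_abs]; exact habs2 s)
      rw [Real.norm_eq_abs] at h
      have habs : |x - (p + n * ε)| ≤ ε := by
        rw [abs_of_nonneg (by linarith)]
        linarith
      calc |∫ s in p + n * ε..x, hfun s| ≤ 2 * lam⁻¹ * |x - (p + n * ε)| := h
        _ ≤ 2 * lam⁻¹ * ε := by nlinarith
    have hgrid' := hgrid n
    have hne : (n:ℝ) * (2 * L * lam⁻¹ * ε ^ 2) ≤ 2 * L * lam⁻¹ * (T * lam⁻¹) * ε := by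
      have h1 : (n:ℝ) * ε ≤ T * lam⁻¹ := by
        have := hx.2
        rw [hbdef] at this
        linarith
      have h2 : (0:ℝ) ≤ 2 * L * lam⁻¹ * ε := by positivity
      calc (n:ℝ) * (2 * L * lam⁻¹ * ε ^ 2) = (2 * L * lam⁻¹ * ε) * ((n:ℝ) * ε) := by ring
        _ ≤ (2 * L * lam⁻¹ * ε) * (T * lam⁻¹) := by nlinarith [mul_nonneg (Nat.cast_nonneg n) hε0.le]
        _ = 2 * L * lam⁻¹ * (T * lam⁻¹) * ε := by ring
    calc |∫ s in p..x, hfun s|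
        = |(∫ s in p..p + n * ε, hfun s) + ∫ s in p + n * ε..x, hfun s| := by rw [hadj]
      _ ≤ |∫ s in p..p + n * ε, hfun s| + |∫ s in p + n * ε..x, hfun s| := abs_add_le _ _
      _ ≤ 2 * L * lam⁻¹ * (T * lam⁻¹) * ε + 2 * lam⁻¹ * ε := add_le_add (hgrid'.trans hne) htail
      _ = C₁ * ε := by rw [hC₁def]; ring
  -- range of X ε
  have hGpos : ∀ q : ℝ × ℝ, 0 < G q := fun q => lt_of_lt_of_le hlam (hGlb q)
  have hF1 : ∀ q : ℝ × ℝ, lam ≤ 1 / G q ∧ 1 / G q ≤ lam⁻¹ := by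
    intro q
    constructor
    · rw [le_div_iff₀ (hGpos q)]
      have h1 : G q * lam ≤ (1 / lam) * lam := mul_le_mul_of_nonneg_right (hGub q) hlam.le
      have h2 : (1 / lam) * lam = 1 := by field_simp
      nlinarith
    · rw [one_div]
      exact inv_anti₀ hlam (hGlb q)
  have hXrange : ∀ t' ∈ Icc (0:ℝ) T, X ε t' ∈ Icc p b := by
    intro t' ht'
    have hsub : Icc (0:ℝ) t' ⊆ Icc 0 T := Icc_subset_Icc le_rfl ht'.2
    have huIcc : uIcc (0:ℝ) t' = Icc 0 t' := uIcc_of_le ht'.1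
    have hcont' : ContinuousOn (fun s => 1 / G (s, X ε s / ε)) (Icc 0 t') := by
      apply ContinuousOn.div continuousOn_const
      · exact hlip.continuous.comp_continuousOn
          (continuousOn_id.prodMk ((hXc.mono hsub).div_const ε))
      · exact fun s _ => (hGpos _).ne'
    have hint : IntervalIntegrable (fun s => 1 / G (s, X ε s / ε))
        MeasureTheory.volume 0 t' := by
      apply ContinuousOn.intervalIntegrable
      rwa [huIcc]
    have hkey : X ε t' - p = ∫ s in (0:ℝ)..t', 1 / G (s, X ε s / ε) := by
      have h := integral_eq_sub_of_hasDerivAt (f := X ε)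
        (f' := fun s => 1 / G (s, X ε s / ε))
        (fun s hs => hXode ε hε s (hsub (huIcc ▸ hs))) hint
      rw [h, hXinit ε hε]
    have hlow : lam * t' ≤ ∫ s in (0:ℝ)..t', 1 / G (s, X ε s / ε) := by
      have := integral_mono_on (μ := MeasureTheory.volume) (f := fun _ => lam)
        (g := fun s => 1 / G (s, X ε s / ε)) ht'.1 intervalIntegrable_const hint
        (fun s _ => (hF1 _).1)
      simpa [mul_comm] using this
    have hhigh : (∫ s in (0:ℝ)..t', 1 / G (s, X ε s / ε)) ≤ lam⁻¹ * t' := by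
      have := integral_mono_on (μ := MeasureTheory.volume) (g := fun _ => lam⁻¹)
        (f := fun s => 1 / G (s, X ε s / ε)) ht'.1 hint intervalIntegrable_const
        (fun s _ => (hF1 _).2)
      simpa [mul_comm] using this
    constructor
    · nlinarith [mul_nonneg hlam.le ht'.1]
    · rw [hbdef]
      nlinarith [mul_le_mul_of_nonneg_left ht'.2 hlaminv.le]
  -- the comparison function
  set Fe : ℝ → ℝ := fun x => ∫ s in p..x, G (tau s, s / ε) with hFedef
  have hFed : ∀ x, HasDerivAt Fe (G (tau x, x / ε)) x := fun x =>
    (hosc_cont.integral_hasStrictDerivAt p x).hasDerivAt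
  have hFe_tau : ∀ x, Fe x - tau x = ∫ s in p..x, hfun s := by
    intro x
    rw [← htauint x, ← integral_sub (hosc_cont.intervalIntegrable p x)
      (hGbtau_cont.intervalIntegrable p x)]
  set u : ℝ → ℝ := fun s => Fe (X ε s) - s with hudef
  have hud : ∀ s ∈ Icc (0:ℝ) T, HasDerivAt u
      (G (tau (X ε s), X ε s / ε) * (1 / G (s, X ε s / ε)) - 1) s := by
    intro s hs
    have h1 := (hFed (X ε s)).comp s (hXode ε hε s hs)
    have h2 := h1.sub (hasDerivAt_id s)
    exact h2
  have hu0 : u 0 = 0 := by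
    simp [hudef, hFedef, hXinit ε hε]
  have htau_u : ∀ s ∈ Icc (0:ℝ) T, |tau (X ε s) - s| ≤ ‖u s‖ + C₁ * ε := by
    intro s hs
    have heq : tau (X ε s) - s = u s - (Fe (X ε s) - tau (X ε s)) := by
      rw [hudef]; ring
    rw [heq, hFe_tau]
    calc |u s - ∫ x in p..X ε s, hfun x| ≤ |u s| + |∫ x in p..X ε s, hfun x| := abs_sub _ _
      _ ≤ ‖u s‖ + C₁ * ε := add_le_add (le_of_eq (Real.norm_eq_abs _).symm)
          (hosc _ (hXrange s hs))
  have hbound : ∀ s ∈ Ico (0:ℝ) T,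
      ‖G (tau (X ε s), X ε s / ε) * (1 / G (s, X ε s / ε)) - 1‖ ≤
        K₀ * ‖u s‖ + L * lam⁻¹ * C₁ * ε := by
    intro s hs
    have hs' : s ∈ Icc (0:ℝ) T := Ico_subset_Icc_self hs
    have hGp : 0 < G (s, X ε s / ε) := hGpos _
    have hid : G (tau (X ε s), X ε s / ε) * (1 / G (s, X ε s / ε)) - 1 =
        (G (tau (X ε s), X ε s / ε) - G (s, X ε s / ε)) / G (s, X ε s / ε) := by
      field_simp
    rw [Real.norm_eq_abs, hid, abs_div, abs_of_pos hGp]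
    have h1 : |G (tau (X ε s), X ε s / ε) - G (s, X ε s / ε)| ≤ L * |tau (X ε s) - s| :=
      absG1 hlip _ _ _
    have h2 := htau_u s hs'
    have hGinv : (G (s, X ε s / ε))⁻¹ ≤ lam⁻¹ := inv_anti₀ hlam (hGlb _)
    have habsnn : (0:ℝ) ≤ |G (tau (X ε s), X ε s / ε) - G (s, X ε s / ε)| := abs_nonneg _
    calc |G (tau (X ε s), X ε s / ε) - G (s, X ε s / ε)| / G (s, X ε s / ε)
        = |G (tau (X ε s), X ε s / ε) - G (s, X ε s / ε)| * (G (s, X ε s / ε))⁻¹ := by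
          rw [div_eq_mul_inv]
      _ ≤ (L * |tau (X ε s) - s|) * lam⁻¹ := by
          apply mul_le_mul h1 hGinv (inv_nonneg.mpr hGp.le)
            (mul_nonneg hLnn (abs_nonneg _))
      _ ≤ (L * (‖u s‖ + C₁ * ε)) * lam⁻¹ := by
          have h4 := mul_le_mul_of_nonneg_left h2 hLnn
          exact mul_le_mul_of_nonneg_right h4 hlaminv.le
      _ = L * lam⁻¹ * ‖u s‖ + L * lam⁻¹ * C₁ * ε := by ring
      _ ≤ K₀ * ‖u s‖ + L * lam⁻¹ * C₁ * ε := by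
          have h3 : L * lam⁻¹ ≤ K₀ := by rw [hK₀def]; linarith
          have h4 := mul_le_mul_of_nonneg_right h3 (norm_nonneg (u s))
          linarith
  have hgron := norm_le_gronwallBound_of_norm_deriv_right_le (a := 0) (b := T)
    (f := u) (f' := fun s => G (tau (X ε s), X ε s / ε) * (1 / G (s, X ε s / ε)) - 1)
    (δ := 0) (K := K₀) (ε := L * lam⁻¹ * C₁ * ε)
    (fun s hs => ((hud s hs).continuousAt).continuousWithinAt)
    (fun s hs => (hud s (Ico_subset_Icc_self hs)).hasDerivWithinAt)
    (by rw [hu0]; simp) hbound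
  have hu : ∀ s ∈ Icc (0:ℝ) T, ‖u s‖ ≤ C₂ * ε := by
    intro s hs
    have h := hgron s hs
    rw [sub_zero, gronwallBound_of_K_ne_0 hK₀pos.ne'] at h
    have he0 : (0:ℝ) ≤ L * lam⁻¹ * C₁ * ε := by positivity
    have hdiv : L * lam⁻¹ * C₁ * ε / K₀ ≤ L * lam⁻¹ * C₁ * ε := div_le_self he0 hK₀1
    have hexp1 : Real.exp (K₀ * s) - 1 ≤ Real.exp (K₀ * T) := by
      have := Real.exp_le_exp.mpr (mul_le_mul_of_nonneg_left hs.2 hK₀pos.le)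
      linarith
    have hexp0 : 0 ≤ Real.exp (K₀ * s) - 1 := by
      have : (1:ℝ) = Real.exp 0 := (Real.exp_zero).symm
      rw [this]
      have := Real.exp_le_exp.mpr (mul_nonneg hK₀pos.le hs.1)
      linarith [Real.exp_zero, Real.exp_le_exp.mpr (mul_nonneg hK₀pos.le hs.1)]
    calc ‖u s‖ ≤ 0 * Real.exp (K₀ * s) + L * lam⁻¹ * C₁ * ε / K₀ * (Real.exp (K₀ * s) - 1) := h
      _ = L * lam⁻¹ * C₁ * ε / K₀ * (Real.exp (K₀ * s) - 1) := by ring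
      _ ≤ L * lam⁻¹ * C₁ * ε * Real.exp (K₀ * T) := by
          apply mul_le_mul hdiv hexp1 hexp0 he0
      _ = C₂ * ε := by rw [hC₂def]; ring
  intro t ht
  have h1 : |X ε t - X0 t| ≤ lam⁻¹ * |tau (X ε t) - t| := by
    have h := hX0lip t (tau (X ε t))
    rwa [htauR] at h
  have h2 : |tau (X ε t) - t| ≤ C₂ * ε + C₁ * ε := by
    calc |tau (X ε t) - t| ≤ ‖u t‖ + C₁ * ε := htau_u t ht
      _ ≤ C₂ * ε + C₁ * ε := by linarith [hu t ht]
  calc |X ε t - X0 t| ≤ lam⁻¹ * (C₂ * ε + C₁ * ε) := by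
        have h3 := mul_le_mul_of_nonneg_left h2 hlaminv.le
        linarith
    _ = lam⁻¹ * (C₂ + C₁) * ε := by ring
    _ ≤ (lam⁻¹ * (C₂ + C₁) + 1) * ε := by nlinarith
end

section
/- Let λ > 0 and let G : ℝ → ℝ be Lipschitz continuous, 1-periodic, with G(η) ≥ λ for all η. Fix p ∈ ℝ and T > 0. For each ε ∈ (0,1] let X^ε : [0,T] → ℝ solve dX^ε/dt = 1/G(X^ε(t)/ε), X^ε(0) = p. Set M = ∫₀¹ G(η) dη. Then there exists a constant C > 0 (independent of ε) such that sup_{t∈[0,T]} |X^ε(t) − (p + t/M)| ≤ C ε for all ε ∈ (0,1]. In particular, the limit X⁰(t) = lim_{ε→0} X^ε(t) is the linear function p + t/M, whose slope is the harmonic mean of the velocity field F = 1/G. -/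
open Set Filter

/-- Theorem 1, second part: when the velocity `1/G` does not depend
on `t` and `G` is Lipschitz, `1`-periodic and bounded below by `λ > 0`, the solutions of
`dX^ε/dt = 1/G(X^ε/ε)`, `X^ε(0) = p`, converge uniformly on `[0,T]` with rate `O(ε)`
to the linear function `p + t/M`, where `M = ∫₀¹ G`. -/
theorem stmt_1
    (lam : ℝ) (hlam : 0 < lam)
    (G : ℝ → ℝ)
    (hGlip : ∃ L : NNReal, LipschitzWith L G)
    (hGper : ∀ η : ℝ, G (η + 1) = G η)
    (hGlb : ∀ η : ℝ, lam ≤ G η)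
    (p T : ℝ) (hT : 0 < T)
    (X : ℝ → ℝ → ℝ)
    (hXinit : ∀ ε ∈ Ioc (0:ℝ) 1, X ε 0 = p)
    (hXode : ∀ ε ∈ Ioc (0:ℝ) 1, ∀ t ∈ Icc (0:ℝ) T,
      HasDerivAt (X ε) (1 / G (X ε t / ε)) t)
    (M : ℝ) (hM : M = ∫ η in (0:ℝ)..1, G η) :
    ∃ C > (0:ℝ), ∀ ε ∈ Ioc (0:ℝ) 1, ∀ t ∈ Icc (0:ℝ) T,
      |X ε t - (p + t / M)| ≤ C * ε := by
  obtain ⟨L, hL⟩ := hGlip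
  have hGcont : Continuous G := hL.continuous
  have hGpos : ∀ η, 0 < G η := fun η => lt_of_lt_of_le hlam (hGlb η)
  have hGne : ∀ η, G η ≠ 0 := fun η => (hGpos η).ne'
  have hperG : Function.Periodic G 1 := hGper
  have hint : ∀ a b : ℝ, IntervalIntegrable G MeasureTheory.volume a b :=
    fun a b => hGcont.intervalIntegrable a b
  -- M is positive
  have hMpos : 0 < M := by
    rw [hM]
    calc (0:ℝ) < lam * (1 - 0) := by simpa using hlam
    _ = ∫ _ in (0:ℝ)..1, lam := by simp
    _ ≤ ∫ η in (0:ℝ)..1, G η := by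
        apply intervalIntegral.integral_mono_on zero_le_one
          (intervalIntegrable_const) (hint 0 1)
        intro x _; exact hGlb x
  have hMne : M ≠ 0 := hMpos.ne'
  -- The antiderivative of G
  set Φ : ℝ → ℝ := fun x => ∫ η in (0:ℝ)..x, G η with hΦdef
  have hΦderiv : ∀ x, HasDerivAt Φ (G x) x := fun x =>
    intervalIntegral.integral_hasDerivAt_right (hint 0 x)
      (hGcont.stronglyMeasurableAtFilter _ _) hGcont.continuousAt
  have hΦcont : Continuous Φ := by
    have : Differentiable ℝ Φ := fun x => (hΦderiv x).differentiableAt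
    exact this.continuous
  -- Φ (x+1) = Φ x + M
  have hΦadd : ∀ x : ℝ, Φ (x + 1) = Φ x + M := by
    intro x
    have h1 : (∫ η in (0:ℝ)..x, G η) + (∫ η in x..(x+1), G η) = ∫ η in (0:ℝ)..(x+1), G η :=
      intervalIntegral.integral_add_adjacent_intervals (hint 0 x) (hint x (x+1))
    have h2 : (∫ η in x..(x+1), G η) = ∫ η in (0:ℝ)..(0+1), G η :=
      hperG.intervalIntegral_add_eq x 0
    simp only [zero_add] at h2
    rw [hΦdef]; simp only [← h1, h2, ← hM]
  -- r is periodic and bounded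
  set r : ℝ → ℝ := fun x => Φ x - M * x with hrdef
  have hrper : Function.Periodic r 1 := by
    intro x
    simp only [hrdef, hΦadd x]
    ring
  have hrcont : Continuous r := by fun_prop
  obtain ⟨B, hB⟩ := (isCompact_Icc (a := (0:ℝ)) (b := 1)).exists_bound_of_continuousOn
    hrcont.continuousOn
  have hBall : ∀ x : ℝ, |r x| ≤ B := by
    intro x
    have h1 : r x = r (x - (⌊x⌋ : ℤ) * 1) := (hrper.sub_int_mul_eq ⌊x⌋).symm
    have h2 : x - (⌊x⌋ : ℤ) * 1 ∈ Icc (0:ℝ) 1 := by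
      constructor
      · simpa using Int.sub_floor_div_mul_nonneg x one_pos
      · rw [mul_one]
        have := Int.fract_lt_one x
        rw [Int.fract] at this
        linarith
    calc |r x| = ‖r (x - (⌊x⌋ : ℤ) * 1)‖ := by rw [← h1]; rfl
    _ ≤ B := hB _ h2
  have hB0 : 0 ≤ B := le_trans (abs_nonneg _) (hBall 0)
  refine ⟨(2 * B + 1) / M, by positivity, ?_⟩
  rintro ε ⟨hε0, hε1⟩ t ht
  have hεne : ε ≠ 0 := hε0.ne'
  -- the key identity: ε * Φ (X ε t / ε) - t is constant on [0, T]
  have key : ∀ s ∈ Icc (0:ℝ) T, ε * Φ (X ε s / ε) - s = ε * Φ (p / ε) := by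
    have hcont : ContinuousOn (fun s => ε * Φ (X ε s / ε) - s) (Icc 0 T) := by
      intro s hs
      have hX : ContinuousAt (X ε) s :=
        (hXode ε ⟨hε0, hε1⟩ s hs).continuousAt
      exact ((continuousAt_const.mul (hΦcont.continuousAt.comp
        (hX.div_const ε))).sub continuousAt_id).continuousWithinAt
    have hderiv : ∀ s ∈ Ico (0:ℝ) T,
        HasDerivWithinAt (fun s => ε * Φ (X ε s / ε) - s) 0 (Ici s) s := by
      intro s hs
      have hs' : s ∈ Icc (0:ℝ) T := ⟨hs.1, hs.2.le⟩
      have hX := hXode ε ⟨hε0, hε1⟩ s hs'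
      have hcomp : HasDerivAt (fun s => Φ (X ε s / ε))
          (G (X ε s / ε) * (1 / G (X ε s / ε) / ε)) s :=
        by have h := (hΦderiv (X ε s / ε)).comp s (hX.div_const ε); exact h
      have : HasDerivAt (fun s => ε * Φ (X ε s / ε) - s)
          (ε * (G (X ε s / ε) * (1 / G (X ε s / ε) / ε)) - 1) s :=
        ((hcomp.const_mul ε).sub (hasDerivAt_id s))
      have heq : ε * (G (X ε s / ε) * (1 / G (X ε s / ε) / ε)) - 1 = 0 := by
        have h := hGne (X ε s / ε)
        field_simp
        ring
      rw [heq] at this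
      exact this.hasDerivWithinAt
    intro s hs
    have := constant_of_has_deriv_right_zero hcont hderiv s hs
    simpa [hXinit ε ⟨hε0, hε1⟩] using this
  have hkey := key t ht
  -- rewrite using Φ x = M x + r x
  have hΦeq : ∀ x : ℝ, Φ x = M * x + r x := by intro x; simp [hrdef]
  rw [hΦeq, hΦeq] at hkey
  -- derive the formula for X ε t
  have hident : X ε t - (p + t / M) = ε * (r (p / ε) - r (X ε t / ε)) / M := by
    field_simp at hkey ⊢
    nlinarith [hkey]
  rw [hident]
  rw [abs_div, abs_of_pos hMpos, div_le_iff₀ hMpos]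
  have h1 : |ε * (r (p / ε) - r (X ε t / ε))| ≤ ε * (2 * B) := by
    rw [abs_mul, abs_of_pos hε0]
    apply mul_le_mul_of_nonneg_left _ hε0.le
    calc |r (p / ε) - r (X ε t / ε)| ≤ |r (p / ε)| + |r (X ε t / ε)| := abs_sub _ _
    _ ≤ B + B := add_le_add (hBall _) (hBall _)
    _ = 2 * B := by ring
  calc |ε * (r (p / ε) - r (X ε t / ε))| ≤ ε * (2 * B) := h1
  _ ≤ (2 * B + 1) * ε := by nlinarith
  _ = (2 * B + 1) / M * ε * M := by field_simp
end

section
/- Let a, h, σ > 0 and let F : ℝ → ℝ be the a-periodic 'sawtooth' function defined on one period by F(τ) = (2h/a)τ + σ for τ ∈ [0, a/2) and F(τ) = (2h/a)(a − τ) + σ for τ ∈ [a/2, a). Fix p ∈ ℝ and T > 0, and for each ε ∈ (0,1] let y^ε : [0,T] → ℝ solve dy^ε/dt = F(y^ε(t)/ε), y^ε(0) = p. Set β = (1/a) ∫₀^a dτ/F(τ). Then β = (1/h) log((h+σ)/σ), and y^ε converges uniformly on [0,T] as ε → 0 to the linear function y⁰(t) = p + t/β. -/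
open Set Filter

lemma intlin (c d u v : ℝ) (hc : c ≠ 0) (hpos : ∀ x ∈ Set.uIcc u v, 0 < c * x + d) :
    ∫ x in u..v, 1 / (c * x + d) =
      1 / c * (Real.log (c * v + d) - Real.log (c * u + d)) := by
  have hder : ∀ x ∈ Set.uIcc u v,
      HasDerivAt (fun x => 1 / c * Real.log (c * x + d)) (1 / (c * x + d)) x := by
    intro x hx
    have l1 : HasDerivAt (fun x : ℝ => c * x + d) c x := by
      simpa using ((hasDerivAt_id x).const_mul c).add_const d
    have l2 := (Real.hasDerivAt_log (hpos x hx).ne').comp x l1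
    have l3 := l2.const_mul (1 / c)
    refine l3.congr_deriv ?_
    have hne := (hpos x hx).ne'
    field_simp
  have hint : IntervalIntegrable (fun x => 1 / (c * x + d)) MeasureTheory.volume u v := by
    apply ContinuousOn.intervalIntegrable
    exact continuousOn_const.div (by fun_prop) (fun x hx => (hpos x hx).ne')
  rw [intervalIntegral.integral_eq_sub_of_hasDerivAt hder hint]
  ring

/-- Example 2, sawtooth velocity: for the `a`-periodic sawtooth
function `F` with `F(τ) = (2h/a)τ + σ` on `[0,a/2)` and `F(τ) = (2h/a)(a−τ) + σ` on
`[a/2,a)`, the harmonic-mean exponent `β = (1/a) ∫₀^a dτ/F(τ)` equals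
`(1/h) log((h+σ)/σ)`, and the solutions of `dy^ε/dt = F(y^ε/ε)`, `y^ε(0) = p`,
converge uniformly on `[0,T]` as `ε → 0` to the linear function `y⁰(t) = p + t/β`. -/
theorem stmt_13
    (a h σ : ℝ) (ha : 0 < a) (hh : 0 < h) (hσ : 0 < σ)
    (F : ℝ → ℝ)
    (hF1 : ∀ τ ∈ Ico (0:ℝ) (a / 2), F τ = 2 * h / a * τ + σ)
    (hF2 : ∀ τ ∈ Ico (a / 2) a, F τ = 2 * h / a * (a - τ) + σ)
    (hFper : ∀ τ : ℝ, F (τ + a) = F τ)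
    (p T : ℝ) (hT : 0 < T)
    (y : ℝ → ℝ → ℝ)
    (hyinit : ∀ ε ∈ Ioc (0:ℝ) 1, y ε 0 = p)
    (hyode : ∀ ε ∈ Ioc (0:ℝ) 1, ∀ t ∈ Icc (0:ℝ) T,
      HasDerivAt (y ε) (F (y ε t / ε)) t)
    (β : ℝ) (hβ : β = (1 / a) * ∫ τ in (0:ℝ)..a, 1 / F τ) :
    β = (1 / h) * Real.log ((h + σ) / σ) ∧
    TendstoUniformlyOn (fun ε t => y ε t) (fun t => p + t / β)
      (nhdsWithin 0 (Ioc (0:ℝ) 1)) (Icc (0:ℝ) T) := by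
  have hper : Function.Periodic F a := hFper
  -- reduction to fundamental domain
  have hred : ∀ x : ℝ, ∃ r, r ∈ Ico (0:ℝ) a ∧ F x = F r := by
    intro x
    refine ⟨x - ⌊x / a⌋ * a, ⟨Int.sub_floor_div_mul_nonneg x ha, Int.sub_floor_div_mul_lt x ha⟩,
      (hper.sub_int_mul_eq ⌊x / a⌋).symm⟩
  -- pointwise bounds
  have hFge : ∀ x : ℝ, σ ≤ F x := by
    intro x
    obtain ⟨r, ⟨hr0, hra⟩, hxr⟩ := hred x
    rw [hxr]
    by_cases hcase : r < a / 2
    · rw [hF1 r ⟨hr0, hcase⟩]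
      have := mul_nonneg (show (0:ℝ) ≤ 2 * h / a by positivity) hr0
      linarith
    · rw [hF2 r ⟨not_lt.mp hcase, hra⟩]
      have := mul_nonneg (show (0:ℝ) ≤ 2 * h / a by positivity) (by linarith : (0:ℝ) ≤ a - r)
      linarith
  have hFle : ∀ x : ℝ, F x ≤ h + σ := by
    intro x
    obtain ⟨r, ⟨hr0, hra⟩, hxr⟩ := hred x
    rw [hxr]
    by_cases hcase : r < a / 2
    · rw [hF1 r ⟨hr0, hcase⟩]
      have : 2 * h / a * r ≤ 2 * h / a * (a / 2) := by
        apply mul_le_mul_of_nonneg_left hcase.le (by positivity)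
      have h2 : 2 * h / a * (a / 2) = h := by field_simp
      linarith
    · rw [hF2 r ⟨not_lt.mp hcase, hra⟩]
      have h0 : a - r ≤ a / 2 := by linarith [not_lt.mp hcase]
      have : 2 * h / a * (a - r) ≤ 2 * h / a * (a / 2) :=
        mul_le_mul_of_nonneg_left h0 (by positivity)
      have h2 : 2 * h / a * (a / 2) = h := by field_simp
      linarith
  have hFpos : ∀ x : ℝ, 0 < F x := fun x => lt_of_lt_of_le hσ (hFge x)
  -- formulas on closed intervals
  have key1 : ∀ x ∈ Icc (0:ℝ) (a / 2), F x = 2 * h / a * x + σ := by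
    intro x ⟨hx0, hx2⟩
    rcases lt_or_eq_of_le hx2 with hlt | heq
    · exact hF1 x ⟨hx0, hlt⟩
    · subst heq
      rw [hF2 (a/2) ⟨le_refl _, by linarith⟩]; ring
  have key2 : ∀ x ∈ Icc (a / 2) a, F x = 2 * h / a * (a - x) + σ := by
    intro x ⟨hx0, hx2⟩
    rcases lt_or_eq_of_le hx2 with hlt | heq
    · exact hF2 x ⟨hx0, hlt⟩
    · have h0 : F a = F 0 := by simpa using hFper 0
      rw [heq, h0, hF1 0 ⟨le_refl _, by linarith⟩]; ring
  -- the continuous sawtooth model g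
  set g : ℝ → ℝ := fun x => σ + h - 2 * h / a * |x - a / 2| with hg_def
  have hgc : Continuous g := by
    apply Continuous.sub continuous_const
    exact continuous_const.mul (continuous_id.sub continuous_const).abs
  have hFg : ∀ x ∈ Icc (0:ℝ) a, F x = g x := by
    intro x ⟨hx0, hxa⟩
    by_cases hc : x ≤ a / 2
    · rw [key1 x ⟨hx0, hc⟩, hg_def]
      simp only
      rw [abs_of_nonpos (by linarith)]
      field_simp; ring
    · rw [key2 x ⟨(not_le.mp hc).le, hxa⟩, hg_def]
      simp only
      rw [abs_of_nonneg (by linarith [not_le.mp hc])]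
      field_simp; ring
  have hg0 : g 0 = σ := by
    simp only [hg_def, zero_sub, abs_neg, abs_of_nonneg (by positivity : (0:ℝ) ≤ a/2)]
    field_simp; ring
  have hga : g a = σ := by
    have : |a - a / 2| = a / 2 := by rw [abs_of_nonneg (by linarith)]; ring
    simp only [hg_def, this]
    field_simp; ring
  -- global continuity of F
  have hFc : Continuous F := by
    rw [continuous_iff_continuousAt]
    intro x
    set n : ℤ := ⌊x / a⌋ with hn
    have hx1 : (n:ℝ) * a ≤ x := by
      have := Int.floor_le (x / a)
      calc (n:ℝ) * a ≤ x / a * a := by nlinarith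
        _ = x := by field_simp
    have hx2 : x < (n:ℝ) * a + a := by
      have := Int.lt_floor_add_one (x / a)
      have h2 : x / a * a < ((n:ℝ) + 1) * a := by nlinarith
      calc x = x / a * a := by field_simp
        _ < ((n:ℝ) + 1) * a := h2
        _ = (n:ℝ) * a + a := by ring
    set G3 : ℝ → ℝ := fun u => if u ≤ 0 then g (u + a) else if u ≤ a then g u else g (u - a)
      with hG3
    have hG3c : Continuous G3 := by
      apply Continuous.if_le
      · exact hgc.comp (continuous_id.add continuous_const)
      · apply Continuous.if_le (hgc) (hgc.comp (continuous_id.sub continuous_const))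
          continuous_id continuous_const
        intro u hu; simp only [id_eq] at hu; subst hu
        simp [hga, hg0, sub_self]
      · exact continuous_id
      · exact continuous_const
      · intro u hu; subst hu
        simp [hga, hg0, ha.le]
    have hs : IsOpen (Ioo ((n:ℝ) * a - a) ((n:ℝ) * a + 2 * a)) := isOpen_Ioo
    have hxs : x ∈ Ioo ((n:ℝ) * a - a) ((n:ℝ) * a + 2 * a) := ⟨by linarith, by linarith⟩
    have hcs : ContinuousOn F (Ioo ((n:ℝ) * a - a) ((n:ℝ) * a + 2 * a)) := by
      apply ContinuousOn.congr ((hG3c.comp (continuous_id.sub continuous_const)).continuousOn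
        (s := Ioo ((n:ℝ) * a - a) ((n:ℝ) * a + 2 * a)))
      intro z hz
      have h1 : F z = F (z - (n:ℝ) * a) := (hper.sub_int_mul_eq n).symm
      set u := z - (n:ℝ) * a with hu
      have hu1 : -a < u := by simp only [hu]; cases hz; linarith
      have hu2 : u < 2 * a := by simp only [hu]; cases hz; linarith
      show F z = G3 u
      rw [h1]; simp only [hG3]
      by_cases hc1 : u ≤ 0
      · rw [if_pos hc1, ← hFper u]
        exact hFg (u + a) ⟨by linarith, by linarith⟩
      · rw [if_neg hc1]
        by_cases hc2 : u ≤ a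
        · rw [if_pos hc2]
          exact hFg u ⟨(not_le.mp hc1).le, hc2⟩
        · rw [if_neg hc2]
          have : F u = F (u - a) := by
            have := hFper (u - a); rw [sub_add_cancel] at this; exact this
          rw [this]
          exact hFg (u - a) ⟨by linarith [not_le.mp hc2], by linarith⟩
    exact hcs.continuousAt (hs.mem_nhds hxs)  -- integrand is continuous
  have hIc : Continuous (fun τ => 1 / F τ) :=
    continuous_const.div hFc (fun τ => (hFpos τ).ne')
  have hInt : ∀ u v : ℝ, IntervalIntegrable (fun τ => 1 / F τ) MeasureTheory.volume u v :=
    fun u v => hIc.intervalIntegrable u v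
  -- value of the period integral
  have hval : (∫ τ in (0:ℝ)..a, 1 / F τ) = a / h * Real.log ((h + σ) / σ) := by
    have hsplit := intervalIntegral.integral_add_adjacent_intervals
      (hInt 0 (a / 2)) (hInt (a / 2) a)
    have hu1 : uIcc (0:ℝ) (a / 2) = Icc (0:ℝ) (a / 2) := uIcc_of_le (by positivity)
    have hu2 : uIcc (a / 2) a = Icc (a / 2) a := uIcc_of_le (by linarith)
    have hI1 : (∫ τ in (0:ℝ)..(a / 2), 1 / F τ)
        = ∫ τ in (0:ℝ)..(a / 2), 1 / (2 * h / a * τ + σ) := by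
      apply intervalIntegral.integral_congr
      intro τ hτ
      rw [hu1] at hτ
      show 1 / F τ = 1 / (2 * h / a * τ + σ)
      rw [key1 τ hτ]
    have hI2 : (∫ τ in (a / 2)..a, 1 / F τ)
        = ∫ τ in (a / 2)..a, 1 / (-(2 * h / a) * τ + (2 * h + σ)) := by
      apply intervalIntegral.integral_congr
      intro τ hτ
      rw [hu2] at hτ
      show 1 / F τ = 1 / (-(2 * h / a) * τ + (2 * h + σ))
      rw [key2 τ hτ]
      have : 2 * h / a * (a - τ) + σ = -(2 * h / a) * τ + (2 * h + σ) := by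
        field_simp; ring
      rw [this]
    have hc1 : (2 * h / a) ≠ 0 := by positivity
    have hc2 : -(2 * h / a) ≠ 0 := by simpa using hc1
    have hv1 : (∫ τ in (0:ℝ)..(a / 2), 1 / (2 * h / a * τ + σ))
        = 1 / (2 * h / a) * (Real.log (2 * h / a * (a / 2) + σ)
            - Real.log (2 * h / a * 0 + σ)) := by
      apply intlin _ _ _ _ hc1
      intro x hx
      rw [hu1] at hx
      have := mul_nonneg (show (0:ℝ) ≤ 2 * h / a by positivity) hx.1
      linarith
    have hv2 : (∫ τ in (a / 2)..a, 1 / (-(2 * h / a) * τ + (2 * h + σ)))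
        = 1 / (-(2 * h / a)) * (Real.log (-(2 * h / a) * a + (2 * h + σ))
            - Real.log (-(2 * h / a) * (a / 2) + (2 * h + σ))) := by
      apply intlin _ _ _ _ hc2
      intro x hx
      rw [hu2] at hx
      have h1 : -(2 * h / a) * x + (2 * h + σ) = 2 * h / a * (a - x) + σ := by
        field_simp; ring
      rw [h1]
      have := mul_nonneg (show (0:ℝ) ≤ 2 * h / a by positivity)
        (by linarith [hx.2] : (0:ℝ) ≤ a - x)
      linarith
    have e1 : 2 * h / a * (a / 2) + σ = h + σ := by field_simp
    have e2 : 2 * h / a * 0 + σ = σ := by ring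
    have e3 : -(2 * h / a) * a + (2 * h + σ) = σ := by field_simp; ring
    have e4 : -(2 * h / a) * (a / 2) + (2 * h + σ) = h + σ := by field_simp; ring
    rw [← hsplit, hI1, hI2, hv1, hv2, e1, e2, e3, e4,
      Real.log_div (by positivity) hσ.ne']
    field_simp
    ring
  -- the value of β
  have hβval : β = 1 / h * Real.log ((h + σ) / σ) := by
    rw [hβ, hval]; field_simp
  have hβpos : 0 < β := by
    rw [hβval]
    have h1 : (1:ℝ) < (h + σ) / σ := (one_lt_div hσ).mpr (by linarith)
    have := Real.log_pos h1
    positivity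
  -- the antiderivative G
  set G : ℝ → ℝ := fun x => ∫ τ in (0:ℝ)..x, 1 / F τ with hG_def
  have hGd : ∀ x : ℝ, HasDerivAt G (1 / F x) x :=
    fun x => (hIc.integral_hasStrictDerivAt 0 x).hasDerivAt
  have hIper : Function.Periodic (fun τ => 1 / F τ) a := fun τ => by simp [hFper τ]
  have hIa : (∫ τ in (0:ℝ)..a, 1 / F τ) = a * β := by
    rw [hβ]; field_simp
  have hGa : ∀ x : ℝ, G (x + a) = G x + a * β := by
    intro x
    have h1 := intervalIntegral.integral_add_adjacent_intervals (hInt 0 x) (hInt x (x + a))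
    have h2 : (∫ τ in x..(x + a), 1 / F τ) = a * β := by
      rw [hIper.intervalIntegral_add_eq x 0, zero_add, hIa]
    simp only [hG_def]
    rw [← h1, h2]
  -- the corrector H = G - βx is periodic and bounded
  set C : ℝ := a / σ + β * a with hC_def
  have hCpos : 0 < C := by positivity
  have hGb : ∀ x : ℝ, |G x - β * x| ≤ C := by
    have hHper : Function.Periodic (fun x => G x - β * x) a := by
      intro x
      simp only
      rw [hGa x]; ring
    intro x
    have hr0 : 0 ≤ x - ⌊x / a⌋ * a := Int.sub_floor_div_mul_nonneg x ha
    have hra : x - ⌊x / a⌋ * a < a := Int.sub_floor_div_mul_lt x ha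
    have hHx : G x - β * x = G (x - ⌊x / a⌋ * a) - β * (x - ⌊x / a⌋ * a) :=
      (hHper.sub_int_mul_eq ⌊x / a⌋).symm
    rw [hHx]
    generalize hgen : x - (⌊x / a⌋ : ℝ) * a = r at hr0 hra hHx ⊢
    have hG0 : 0 ≤ G r := by
      apply intervalIntegral.integral_nonneg hr0
      intro u _
      exact (one_div_pos.mpr (hFpos u)).le
    have hGle : G r ≤ a / σ := by
      have h1 : G r ≤ ∫ _ in (0:ℝ)..r, 1 / σ := by
        apply intervalIntegral.integral_mono_on hr0 (hInt 0 r)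
          (intervalIntegrable_const)
        intro u _
        exact one_div_le_one_div_of_le hσ (hFge u)
      have h2 : (∫ _ in (0:ℝ)..r, 1 / σ) = r * (1 / σ) := by
        simp [intervalIntegral.integral_const]
      rw [h2] at h1
      have : r * (1 / σ) ≤ a * (1 / σ) := by
        apply mul_le_mul_of_nonneg_right hra.le (by positivity)
      calc G r ≤ r * (1 / σ) := h1
        _ ≤ a * (1 / σ) := this
        _ = a / σ := by ring
    have hb1 : 0 ≤ β * r := by positivity
    have hb2 : β * r ≤ β * a := mul_le_mul_of_nonneg_left hra.le hβpos.le
    have haσ : 0 < a / σ := by positivity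
    rw [hC_def, abs_le]
    constructor <;> linarith
  -- main quantitative estimate
  have key : ∀ ε ∈ Ioc (0:ℝ) 1, ∀ t ∈ Icc (0:ℝ) T,
      |y ε t - (p + t / β)| ≤ 2 * C * ε / β := by
    intro ε hε t ht
    have hε0 : 0 < ε := hε.1
    set w : ℝ → ℝ := fun s => G (y ε s / ε) - s / ε with hw_def
    have hw : ∀ s ∈ Icc (0:ℝ) T, HasDerivAt w 0 s := by
      intro s hs
      have hyd := hyode ε hε s hs
      have h1 : HasDerivAt (fun s => y ε s / ε) (F (y ε s / ε) / ε) s := hyd.div_const ε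
      have h2 := (hGd (y ε s / ε)).comp s h1
      have h3 : HasDerivAt (fun s : ℝ => s / ε) (1 / ε) s := by
        simpa using (hasDerivAt_id s).div_const ε
      have h4 := h2.sub h3
      have hFne : F (y ε s / ε) ≠ 0 := (hFpos _).ne'
      refine h4.congr_deriv ?_
      have hεne : ε ≠ 0 := hε0.ne'
      field_simp
      ring
    have hwc : ContinuousOn w (Icc (0:ℝ) T) :=
      fun s hs => ((hw s hs).continuousAt).continuousWithinAt
    have hwconst := constant_of_has_deriv_right_zero hwc
      (fun s hs => ((hw s (Ico_subset_Icc_self hs)).hasDerivWithinAt))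
    have hwt := hwconst t ht
    have h0T : (0:ℝ) ∈ Icc (0:ℝ) T := ⟨le_refl _, hT.le⟩
    have e1 : G (y ε t / ε) = G (p / ε) + t / ε := by
      have : w t = w 0 := hwt
      simp only [hw_def, hyinit ε hε, zero_div] at this
      linarith
    have b1 := hGb (y ε t / ε)
    have b2 := hGb (p / ε)
    set A := G (y ε t / ε) - β * (y ε t / ε) with hA
    set B := G (p / ε) - β * (p / ε) with hB
    have heq : β * y ε t - β * p - t = ε * (B - A) := by
      rw [hB, hA, e1]
      field_simp
      ring
    have habs : |β * y ε t - β * p - t| ≤ 2 * C * ε := by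
      rw [heq, abs_mul, abs_of_pos hε0]
      have : |B - A| ≤ 2 * C := by
        calc |B - A| ≤ |B| + |A| := abs_sub _ _
          _ ≤ C + C := add_le_add b2 b1
          _ = 2 * C := by ring
      calc ε * |B - A| ≤ ε * (2 * C) := mul_le_mul_of_nonneg_left this hε0.le
        _ = 2 * C * ε := by ring
    have hrew : y ε t - (p + t / β) = (β * y ε t - β * p - t) / β := by
      field_simp
      ring
    rw [hrew, abs_div, abs_of_pos hβpos]
    gcongr
  refine ⟨hβval, ?_⟩
  rw [Metric.tendstoUniformlyOn_iff]
  intro δ hδ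
  have hδ' : 0 < δ * β / (2 * C + 1) := by positivity
  have h1 : ∀ᶠ ε in nhdsWithin (0:ℝ) (Ioc (0:ℝ) 1), ε < δ * β / (2 * C + 1) :=
    (eventually_lt_nhds hδ').filter_mono nhdsWithin_le_nhds
  filter_upwards [h1, eventually_mem_nhdsWithin] with ε hε1 hε2
  intro t ht
  have hb := key ε hε2 t ht
  rw [Real.dist_eq, abs_sub_comm]
  calc |y ε t - (p + t / β)| ≤ 2 * C * ε / β := hb
    _ < δ := by
      rw [div_lt_iff₀ hβpos]
      have h5 : ε * (2 * C + 1) < δ * β := (lt_div_iff₀ (by positivity)).mp hε1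
      have h6 : 2 * C * ε + ε = ε * (2 * C + 1) := by ring
      linarith [hε2.1]
end

section
/- Define F : ℝ → ℝ by the series F(x) = Σ_{k=0}^∞ (2k+1)^{−2} sin(x/(2k+1)). Then the series converges absolutely and uniformly on ℝ, F is continuous and bounded, for every T ∈ ℝ one has ∫₀^T F(x) dx = Σ_{k=0}^∞ (2/(2k+1)) sin²(T/(2(2k+1))), and there exists a constant C > 0 such that |∫₀^T F(x) dx| ≤ C (1 + log(1+T)) for all T ≥ 0. -/
open Set Filter


lemma aux_summable_u : Summable (fun k : ℕ => ((2*(k:ℝ)+1)^2)⁻¹) := by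
  have h : Summable (fun k : ℕ => (((k:ℝ)+1)^2)⁻¹) := by
    have := (summable_nat_add_iff 1).2 (Real.summable_one_div_nat_pow.2 one_lt_two)
    simpa [one_div] using this
  refine Summable.of_nonneg_of_le (fun k => by positivity) (fun k => ?_) h
  have h1 : (0:ℝ) < ((k:ℝ)+1)^2 := by positivity
  apply inv_anti₀ h1
  nlinarith [Nat.cast_nonneg (α := ℝ) k]

lemma aux_term_integral (T : ℝ) (k : ℕ) :
    ∫ x in (0:ℝ)..T, ((2*(k:ℝ)+1)^2)⁻¹ * Real.sin (x/(2*(k:ℝ)+1))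
      = (2/(2*(k:ℝ)+1)) * Real.sin (T/(2*(2*(k:ℝ)+1)))^2 := by
  set c : ℝ := 2*(k:ℝ)+1 with hc
  have hc0 : (0:ℝ) < c := by positivity
  rw [intervalIntegral.integral_const_mul, intervalIntegral.integral_comp_div (c := c)
    (f := Real.sin) hc0.ne', integral_sin]
  have hcos : Real.cos (T/c) = 1 - 2 * Real.sin (T/(2*c))^2 := by
    have h1 := Real.cos_two_mul (T/(2*c))
    have h2 := Real.sin_sq_add_cos_sq (T/(2*c))
    have h3 : 2 * (T/(2*c)) = T/c := by field_simp
    rw [h3] at h1; nlinarith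
  rw [hcos]
  simp only [smul_eq_mul, Real.cos_zero]
  field_simp
  simp only [zero_div, zero_mul, mul_zero, Real.cos_zero]
  ring

lemma aux_telescope (N : ℕ) (hN : 1 ≤ N) :
    HasSum (fun k : ℕ => (((k:ℝ)+N))⁻¹ - (((k:ℝ)+N+1))⁻¹) ((N:ℝ)⁻¹) := by
  have hNr : (1:ℝ) ≤ (N:ℝ) := by exact_mod_cast hN
  have hpos : ∀ k : ℕ, (0:ℝ) < (k:ℝ)+N := fun k => by
    linarith [Nat.cast_nonneg (α := ℝ) k]
  rw [hasSum_iff_tendsto_nat_of_nonneg]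
  · have key : ∀ n : ℕ, ∑ i ∈ Finset.range n, ((((i:ℝ)+N))⁻¹ - (((i:ℝ)+N+1))⁻¹)
        = (N:ℝ)⁻¹ - (((n:ℝ)+N))⁻¹ := by
      intro n
      have := Finset.sum_range_sub' (f := fun i : ℕ => (((i:ℝ)+N))⁻¹) n
      simpa [Nat.cast_add, Nat.cast_one, add_right_comm] using this
    simp only [key]
    have : Tendsto (fun n : ℕ => (((n:ℝ)+N))⁻¹) atTop (nhds 0) := by
      apply Tendsto.comp tendsto_inv_atTop_zero
      apply tendsto_atTop_add_const_right
      exact tendsto_natCast_atTop_atTop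
    simpa using tendsto_const_nhds.sub this
  · intro i
    have h1 : (0:ℝ) < (i:ℝ)+N := hpos i
    rw [sub_nonneg]
    apply inv_anti₀ h1; linarith

/-- Example 3, almost periodic velocity: the series
`F(x) = Σ_{k≥0} (2k+1)⁻² sin(x/(2k+1))` converges absolutely and uniformly on `ℝ`,
`F` is continuous and bounded, `∫₀^T F = Σ_{k≥0} (2/(2k+1)) sin²(T/(2(2k+1)))` for
every `T`, and the primitive grows at most logarithmically:
`|∫₀^T F| ≤ C (1 + log(1+T))` for all `T ≥ 0`. -/
theorem stmt_14
    (F : ℝ → ℝ)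
    (hF : ∀ x : ℝ, F x = ∑' k : ℕ,
      ((2 * (k : ℝ) + 1) ^ 2)⁻¹ * Real.sin (x / (2 * (k : ℝ) + 1))) :
    (∀ x : ℝ, Summable fun k : ℕ =>
      |((2 * (k : ℝ) + 1) ^ 2)⁻¹ * Real.sin (x / (2 * (k : ℝ) + 1))|) ∧
    TendstoUniformly (fun (n : ℕ) (x : ℝ) =>
        ∑ k ∈ Finset.range n, ((2 * (k : ℝ) + 1) ^ 2)⁻¹ * Real.sin (x / (2 * (k : ℝ) + 1)))
      F atTop ∧
    Continuous F ∧
    (∃ M : ℝ, ∀ x : ℝ, |F x| ≤ M) ∧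
    (∀ T : ℝ, (∫ x in (0:ℝ)..T, F x)
        = ∑' k : ℕ, (2 / (2 * (k : ℝ) + 1)) * Real.sin (T / (2 * (2 * (k : ℝ) + 1))) ^ 2) ∧
    (∃ C > (0:ℝ), ∀ T : ℝ, 0 ≤ T →
      |∫ x in (0:ℝ)..T, F x| ≤ C * (1 + Real.log (1 + T))) := by

  have hu := aux_summable_u
  have hbound : ∀ (k : ℕ) (x : ℝ),
      ‖((2*(k:ℝ)+1)^2)⁻¹ * Real.sin (x/(2*(k:ℝ)+1))‖ ≤ ((2*(k:ℝ)+1)^2)⁻¹ := by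
    intro k x
    rw [Real.norm_eq_abs, abs_mul, abs_of_nonneg (a := ((2*(k:ℝ)+1)^2)⁻¹) (by positivity)]
    exact mul_le_of_le_one_right (by positivity) (Real.abs_sin_le_one _)
  have h1 : ∀ x : ℝ, Summable fun k : ℕ =>
      |((2*(k:ℝ)+1)^2)⁻¹ * Real.sin (x/(2*(k:ℝ)+1))| := fun x =>
    Summable.of_nonneg_of_le (fun k => abs_nonneg _) (fun k => hbound k x) hu
  have hFeq : F = fun x => ∑' k : ℕ, ((2*(k:ℝ)+1)^2)⁻¹ * Real.sin (x/(2*(k:ℝ)+1)) :=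
    funext hF
  have h2 : TendstoUniformly (fun (n : ℕ) (x : ℝ) =>
      ∑ k ∈ Finset.range n, ((2*(k:ℝ)+1)^2)⁻¹ * Real.sin (x/(2*(k:ℝ)+1))) F atTop := by
    rw [hFeq]; exact tendstoUniformly_tsum_nat hu (fun k x => hbound k x)
  have hScont : ∀ n : ℕ, Continuous (fun x : ℝ =>
      ∑ k ∈ Finset.range n, ((2*(k:ℝ)+1)^2)⁻¹ * Real.sin (x/(2*(k:ℝ)+1))) := fun n =>
    continuous_finset_sum _ fun k _ =>
      continuous_const.mul (Real.continuous_sin.comp (continuous_id.div_const _))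
  have hFcont : Continuous F := h2.continuous (Eventually.of_forall hScont).frequently
  have hM : ∀ x : ℝ, |F x| ≤ ∑' k : ℕ, ((2*(k:ℝ)+1)^2)⁻¹ := by
    intro x
    rw [hF x, ← Real.norm_eq_abs]
    have hs : Summable fun k : ℕ =>
        ‖((2*(k:ℝ)+1)^2)⁻¹ * Real.sin (x/(2*(k:ℝ)+1))‖ := by
      simp only [Real.norm_eq_abs]; exact h1 x
    exact (norm_tsum_le_tsum_norm hs).trans (Summable.tsum_le_tsum (fun k => hbound k x) hs hu)
  -- summability of the series of integrals
  have hb_sum : ∀ T : ℝ, Summable (fun k : ℕ =>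
      (2/(2*(k:ℝ)+1)) * Real.sin (T/(2*(2*(k:ℝ)+1)))^2) := by
    intro T
    refine Summable.of_nonneg_of_le (fun k => by positivity) (fun k => ?_) (hu.mul_left (T^2))
    have hc : (0:ℝ) < 2*(k:ℝ)+1 := by positivity
    have hs := Real.sin_sq_le_sq (x := T/(2*(2*(k:ℝ)+1)))
    calc (2/(2*(k:ℝ)+1)) * Real.sin (T/(2*(2*(k:ℝ)+1)))^2
        ≤ (2/(2*(k:ℝ)+1)) * (T/(2*(2*(k:ℝ)+1)))^2 := by
          apply mul_le_mul_of_nonneg_left hs (by positivity)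
      _ ≤ T^2 * ((2*(k:ℝ)+1)^2)⁻¹ := by
          have h1 : (1:ℝ) ≤ 2*(k:ℝ)+1 := by
            linarith [Nat.cast_nonneg (α := ℝ) k]
          have heq : (2/(2*(k:ℝ)+1)) * (T/(2*(2*(k:ℝ)+1)))^2
              = T^2 / (2*(2*(k:ℝ)+1)^3) := by field_simp
          rw [heq, ← div_eq_mul_inv (T^2)]
          apply div_le_div_of_nonneg_left (by positivity) (by positivity)
          nlinarith
  have h5 : ∀ T : ℝ, (∫ x in (0:ℝ)..T, F x)
      = ∑' k : ℕ, (2/(2*(k:ℝ)+1)) * Real.sin (T/(2*(2*(k:ℝ)+1)))^2 := by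
    intro T
    have hint : ∀ (k : ℕ), IntervalIntegrable
        (fun x : ℝ => ((2*(k:ℝ)+1)^2)⁻¹ * Real.sin (x/(2*(k:ℝ)+1))) MeasureTheory.volume 0 T :=
      fun k => (continuous_const.mul
        (Real.continuous_sin.comp (continuous_id.div_const _))).intervalIntegrable _ _
    have hlim : Tendsto (fun n : ℕ => ∫ x in (0:ℝ)..T,
        ∑ k ∈ Finset.range n, ((2*(k:ℝ)+1)^2)⁻¹ * Real.sin (x/(2*(k:ℝ)+1))) atTop
        (nhds (∫ x in (0:ℝ)..T, F x)) := by
      apply intervalIntegral.tendsto_integral_filter_of_dominated_convergence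
        (bound := fun _ => ∑' k : ℕ, ((2*(k:ℝ)+1)^2)⁻¹)
      · exact Eventually.of_forall fun n => (hScont n).aestronglyMeasurable
      · refine Eventually.of_forall fun n => Eventually.of_forall fun x _ => ?_
        calc ‖∑ k ∈ Finset.range n, ((2*(k:ℝ)+1)^2)⁻¹ * Real.sin (x/(2*(k:ℝ)+1))‖
            ≤ ∑ k ∈ Finset.range n, ‖((2*(k:ℝ)+1)^2)⁻¹ * Real.sin (x/(2*(k:ℝ)+1))‖ :=
              norm_sum_le _ _
          _ ≤ ∑ k ∈ Finset.range n, ((2*(k:ℝ)+1)^2)⁻¹ :=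
              Finset.sum_le_sum fun k _ => hbound k x
          _ ≤ ∑' k : ℕ, ((2*(k:ℝ)+1)^2)⁻¹ :=
              Summable.sum_le_tsum _ (fun k _ => by positivity) hu
      · exact intervalIntegrable_const
      · exact Eventually.of_forall fun x _ => h2.tendsto_at x
    have heval : ∀ n : ℕ, (∫ x in (0:ℝ)..T,
        ∑ k ∈ Finset.range n, ((2*(k:ℝ)+1)^2)⁻¹ * Real.sin (x/(2*(k:ℝ)+1)))
        = ∑ k ∈ Finset.range n, (2/(2*(k:ℝ)+1)) * Real.sin (T/(2*(2*(k:ℝ)+1)))^2 := by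
      intro n
      rw [intervalIntegral.integral_finset_sum (fun k _ => hint k)]
      exact Finset.sum_congr rfl fun k _ => aux_term_integral T k
    have hlim2 : Tendsto (fun n : ℕ =>
        ∑ k ∈ Finset.range n, (2/(2*(k:ℝ)+1)) * Real.sin (T/(2*(2*(k:ℝ)+1)))^2) atTop
        (nhds (∑' k : ℕ, (2/(2*(k:ℝ)+1)) * Real.sin (T/(2*(2*(k:ℝ)+1)))^2)) :=
      (hb_sum T).hasSum.tendsto_sum_nat
    refine tendsto_nhds_unique ?_ hlim2
    simpa only [heval] using hlim
  refine ⟨h1, h2, hFcont, ⟨∑' k : ℕ, ((2*(k:ℝ)+1)^2)⁻¹, hM⟩, h5, 5, by norm_num, ?_⟩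
  intro T hT
  set b : ℕ → ℝ := fun k => (2/(2*(k:ℝ)+1)) * Real.sin (T/(2*(2*(k:ℝ)+1)))^2 with hb_def
  set N : ℕ := ⌈T⌉₊ + 1 with hN
  have hN1 : 1 ≤ N := Nat.le_add_left 1 _
  have hNr : (1:ℝ) ≤ (N:ℝ) := by exact_mod_cast hN1
  have hTN : T ≤ (N:ℝ) := by
    have := Nat.le_ceil T
    have h2 : ((⌈T⌉₊:ℝ)) ≤ (N:ℝ) := by rw [hN]; push_cast; linarith
    linarith
  have hNle : (N:ℝ) ≤ T + 2 := by
    have := Nat.ceil_lt_add_one hT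
    rw [hN]; push_cast; linarith
  have hlog1 : 0 ≤ Real.log (1+T) := Real.log_nonneg (by linarith)
  rw [h5 T]
  have hbnn : ∀ k, 0 ≤ b k := fun k => by simp only [hb_def]; positivity
  rw [abs_of_nonneg (tsum_nonneg hbnn)]
  have hsplit := Summable.sum_add_tsum_nat_add (f := b) N (hb_sum T)
  rw [← hsplit]
  -- head bound
  have hhead : ∑ k ∈ Finset.range N, b k ≤ 2*(1 + Real.log N) := by
    have step1 : ∑ k ∈ Finset.range N, b k ≤ ∑ k ∈ Finset.range N, 2*((k:ℝ)+1)⁻¹ := by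
      refine Finset.sum_le_sum fun k _ => ?_
      have hk1 : (0:ℝ) < (k:ℝ)+1 := by positivity
      have hk2 : (k:ℝ)+1 ≤ 2*(k:ℝ)+1 := by linarith [Nat.cast_nonneg (α := ℝ) k]
      calc b k ≤ 2/(2*(k:ℝ)+1) * 1 := by
            simp only [hb_def]
            apply mul_le_mul_of_nonneg_left _ (by positivity)
            nlinarith [Real.abs_sin_le_one (T/(2*(2*(k:ℝ)+1))), abs_nonneg (Real.sin (T/(2*(2*(k:ℝ)+1)))), sq_abs (Real.sin (T/(2*(2*(k:ℝ)+1))))]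
        _ = 2 * (2*(k:ℝ)+1)⁻¹ := by rw [mul_one, div_eq_mul_inv]
        _ ≤ 2*((k:ℝ)+1)⁻¹ := by
            apply mul_le_mul_of_nonneg_left (inv_anti₀ hk1 hk2) (by norm_num)
    have step2 : ∑ k ∈ Finset.range N, 2*((k:ℝ)+1)⁻¹ = 2 * ((harmonic N : ℚ) : ℝ) := by
      rw [harmonic]
      push_cast
      rw [Finset.mul_sum]
    have step3 : ((harmonic N : ℚ) : ℝ) ≤ 1 + Real.log N := harmonic_le_one_add_log N
    calc ∑ k ∈ Finset.range N, b k ≤ 2 * ((harmonic N : ℚ) : ℝ) := by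
          rw [← step2]; exact step1
      _ ≤ 2*(1 + Real.log N) := by linarith
  -- tail bound
  have htail : ∑' k : ℕ, b (k + N) ≤ 1 := by
    have hmaj : ∀ k : ℕ, b (k+N) ≤ T * ((((k:ℝ)+N))⁻¹ - (((k:ℝ)+N+1))⁻¹) := by
      intro k
      have hm1 : (1:ℝ) ≤ (k:ℝ)+N := by linarith [Nat.cast_nonneg (α := ℝ) k]
      have hm0 : (0:ℝ) < (k:ℝ)+N := by linarith
      have hc0 : (0:ℝ) < 2*((k:ℝ)+N)+1 := by linarith
      set θ : ℝ := T/(2*(2*((k:ℝ)+N)+1)) with hθdef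
      have hθ : 0 ≤ θ := by positivity
      have hs : Real.sin θ^2 ≤ θ := by
        have ha := Real.abs_sin_le_one θ
        have hb2 := Real.abs_sin_le_abs (x := θ)
        rw [abs_of_nonneg hθ] at hb2
        nlinarith [abs_nonneg (Real.sin θ), sq_abs (Real.sin θ)]
      have hbk : b (k+N) = (2/(2*((k:ℝ)+N)+1)) * Real.sin θ^2 := by
        simp only [hb_def, hθdef]
        push_cast
        ring_nf
      rw [hbk]
      have hiv : (((k:ℝ)+N))⁻¹ - (((k:ℝ)+N+1))⁻¹
          = 1 / (((k:ℝ)+N) * (((k:ℝ)+N)+1)) := by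
        rw [inv_sub_inv hm0.ne' (by linarith : ((k:ℝ)+N+1) ≠ 0)]
        ring_nf
      calc (2/(2*((k:ℝ)+N)+1)) * Real.sin θ^2
          ≤ (2/(2*((k:ℝ)+N)+1)) * θ := by
            apply mul_le_mul_of_nonneg_left hs (by positivity)
        _ ≤ T * ((((k:ℝ)+N))⁻¹ - (((k:ℝ)+N+1))⁻¹) := by
            rw [hiv, hθdef]
            rw [div_mul_div_comm, mul_one_div, div_le_div_iff₀ (by positivity) (by positivity)]
            nlinarith [mul_pos hm0 hm0, sq_nonneg ((k:ℝ)+N)]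
    have hmaj_sum : HasSum (fun k : ℕ => T * ((((k:ℝ)+N))⁻¹ - (((k:ℝ)+N+1))⁻¹))
        (T * (N:ℝ)⁻¹) := (aux_telescope N hN1).mul_left T
    have htsum_le : ∑' k : ℕ, b (k + N) ≤ T * (N:ℝ)⁻¹ := by
      rw [← hmaj_sum.tsum_eq]
      exact Summable.tsum_le_tsum hmaj ((summable_nat_add_iff N).2 (hb_sum T)) hmaj_sum.summable
    have : T * (N:ℝ)⁻¹ ≤ 1 := by
      rw [← div_eq_mul_inv, div_le_one (by linarith)]
      exact hTN
    linarith
  -- put together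
  have hlogN : Real.log N ≤ 1 + Real.log (1+T) := by
    have h1 : Real.log N ≤ Real.log (2*(1+T)) := by
      apply Real.log_le_log (by linarith)
      linarith
    rw [Real.log_mul (by norm_num) (by linarith)] at h1
    have h2 : Real.log 2 ≤ 1 := by
      have := Real.log_le_sub_one_of_pos (by norm_num : (0:ℝ) < 2)
      linarith
    linarith
  have : ∑ k ∈ Finset.range N, b k + ∑' k : ℕ, b (k + N)
      ≤ 2*(1 + (1 + Real.log (1+T))) + 1 := by
    have := hhead.trans (by nlinarith : 2*(1 + Real.log N) ≤ 2*(1 + (1 + Real.log (1+T))))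
    linarith
  nlinarith
end

section
/- Let 0 < a < 1, let F ∈ C¹(ℝ^d; ℝ) satisfy |F(y)| ≤ |y|^a for all y ∈ ℝ^d, fix p ∈ ℝ^d and T > 0, and for each ε ∈ (0,1] let X^ε : [0,T] → ℝ^d be differentiable with dX^ε/dt (t) = (∇F)(X^ε(t)/ε) and X^ε(0) = p. Then there exists a constant C > 0, depending only on T, |p| and a, such that sup_{t∈[0,T]} |X^ε(t) − p| ≤ C ε^{(1−a)/2} for all ε ∈ (0,1]. In particular X^ε converges uniformly on [0,T] to the constant function X⁰(t) ≡ p as ε → 0. -/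
open Set Filter

private lemma cs_aux {g : ℝ → ℝ} {t : ℝ} (ht : 0 ≤ t)
    (hg : ContinuousOn g (Icc 0 t)) (hg0 : ∀ s ∈ Icc 0 t, 0 ≤ g s) :
    (∫ s in (0:ℝ)..t, g s) ^ 2 ≤ t * ∫ s in (0:ℝ)..t, g s ^ 2 := by
  have hu : uIcc (0:ℝ) t = Icc 0 t := uIcc_of_le ht
  have hgi : IntervalIntegrable g MeasureTheory.volume 0 t := by
    apply ContinuousOn.intervalIntegrable; rwa [hu]
  have hg2i : IntervalIntegrable (fun s => g s ^ 2) MeasureTheory.volume 0 t := by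
    apply ContinuousOn.intervalIntegrable; rw [hu]; exact hg.pow 2
  set I := ∫ s in (0:ℝ)..t, g s with hI
  set E := ∫ s in (0:ℝ)..t, g s ^ 2 with hE
  have expand : ∀ c : ℝ, ∫ s in (0:ℝ)..t, (g s - c) ^ 2
      = E - 2 * c * I + c ^ 2 * t := by
    intro c
    have h1 : ∀ s, (g s - c) ^ 2 = (g s ^ 2 - (2 * c) * g s) + c ^ 2 := by
      intro s; ring
    simp_rw [h1]
    rw [intervalIntegral.integral_add (hg2i.sub (hgi.const_mul _))
        intervalIntegrable_const,
      intervalIntegral.integral_sub hg2i (hgi.const_mul _),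
      intervalIntegral.integral_const_mul, intervalIntegral.integral_const]
    simp only [smul_eq_mul]
    ring
  have hquad : ∀ c : ℝ, 0 ≤ t * (c * c) + (-(2 * I)) * c + E := by
    intro c
    have h0 : 0 ≤ ∫ s in (0:ℝ)..t, (g s - c) ^ 2 :=
      intervalIntegral.integral_nonneg ht (fun u _ => sq_nonneg _)
    rw [expand c] at h0
    nlinarith [h0]
  have hd := discrim_le_zero hquad
  rw [discrim] at hd
  nlinarith [hd]

private lemma rpow_le_add_one {x a : ℝ} (hx : 0 ≤ x) (ha0 : 0 ≤ a) (ha1 : a ≤ 1) :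
    x ^ a ≤ x + 1 := by
  rcases le_or_gt x 1 with h | h
  · calc x ^ a ≤ 1 := Real.rpow_le_one hx h ha0
    _ ≤ x + 1 := by linarith
  · calc x ^ a ≤ x ^ (1:ℝ) := Real.rpow_le_rpow_of_exponent_le h.le ha1
    _ = x := Real.rpow_one x
    _ ≤ x + 1 := by linarith

/-- trapping conclusion of Example 5: for the oscillating gradient
flow `dX^ε/dt = ∇F(X^ε/ε)`, `X^ε(0) = p`, with sublinear potential bound
`|F(y)| ≤ ‖y‖^a`, `0 < a < 1`, the trajectories stay within `C ε^{(1−a)/2}` of `p` on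
`[0,T]`; in particular `X^ε` converges uniformly on `[0,T]` to the constant `p`. -/
theorem stmt_16
    (d : ℕ) (a : ℝ) (ha0 : 0 < a) (ha1 : a < 1)
    (F : EuclideanSpace ℝ (Fin d) → ℝ) (hF : ContDiff ℝ 1 F)
    (hFsub : ∀ y : EuclideanSpace ℝ (Fin d), |F y| ≤ ‖y‖ ^ a)
    (p : EuclideanSpace ℝ (Fin d)) (T : ℝ) (hT : 0 < T)
    (X : ℝ → ℝ → EuclideanSpace ℝ (Fin d))
    (hXinit : ∀ ε ∈ Ioc (0:ℝ) 1, X ε 0 = p)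
    (hXode : ∀ ε ∈ Ioc (0:ℝ) 1, ∀ t ∈ Icc (0:ℝ) T,
      HasDerivAt (X ε) (gradient F (ε⁻¹ • X ε t)) t) :
    (∃ C > (0:ℝ), ∀ ε ∈ Ioc (0:ℝ) 1, ∀ t ∈ Icc (0:ℝ) T,
      ‖X ε t - p‖ ≤ C * ε ^ ((1 - a) / 2)) ∧
    TendstoUniformlyOn (fun ε t => X ε t) (fun _ => p)
      (nhdsWithin 0 (Ioc (0:ℝ) 1)) (Icc (0:ℝ) T) := by
  have hGcont : Continuous (fun y : EuclideanSpace ℝ (Fin d) => gradient F y) := by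
    have h1 : Continuous (fderiv ℝ F) := hF.continuous_fderiv one_ne_zero
    exact ((InnerProductSpace.toDual ℝ _).symm.continuous).comp h1
  -- key quantitative estimate via the energy identity + Cauchy–Schwarz
  have key : ∀ ε ∈ Ioc (0:ℝ) 1, ∀ t ∈ Icc (0:ℝ) T,
      ‖X ε t - p‖ ^ 2 ≤ T * ε ^ (1 - a) * ((‖p‖ + ‖X ε t - p‖) ^ a + ‖p‖ ^ a) := by
    intro ε hε t ht
    have hε0 : (0:ℝ) < ε := hε.1
    set Y : ℝ → EuclideanSpace ℝ (Fin d) := X ε with hY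
    set G : ℝ → EuclideanSpace ℝ (Fin d) := fun s => gradient F (ε⁻¹ • Y s) with hG
    have hYd : ∀ s ∈ Icc (0:ℝ) T, HasDerivAt Y (G s) s := hXode ε hε
    have hYc : ContinuousOn Y (Icc 0 T) := fun s hs =>
      (hYd s hs).continuousAt.continuousWithinAt
    have hGc : ContinuousOn G (Icc 0 T) :=
      hGcont.comp_continuousOn (hYc.const_smul ε⁻¹)
    have hsub : uIcc (0:ℝ) t ⊆ Icc 0 T := by
      rw [uIcc_of_le ht.1]; exact Icc_subset_Icc le_rfl ht.2
    have hφd : ∀ s ∈ Icc (0:ℝ) T,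
        HasDerivAt (fun u => ε * F (ε⁻¹ • Y u)) (‖G s‖ ^ 2) s := by
      intro s hs
      have hc : HasDerivAt (fun u => ε⁻¹ • Y u) (ε⁻¹ • G s) s :=
        (hYd s hs).const_smul ε⁻¹
      have hg : HasGradientAt F (gradient F (ε⁻¹ • Y s)) (ε⁻¹ • Y s) :=
        (hF.differentiable one_ne_zero (ε⁻¹ • Y s)).hasGradientAt
      have hcomp := hg.hasFDerivAt.comp_hasDerivAt s hc
      have hval : (InnerProductSpace.toDual ℝ _ (gradient F (ε⁻¹ • Y s)))
          (ε⁻¹ • G s) = ε⁻¹ * ‖G s‖ ^ 2 := by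
        rw [InnerProductSpace.toDual_apply_apply, real_inner_smul_right,
          real_inner_self_eq_norm_sq]
      rw [hval] at hcomp
      have h2 := hcomp.const_mul ε
      have heq : ε * (ε⁻¹ * ‖G s‖ ^ 2) = ‖G s‖ ^ 2 := by field_simp
      rwa [heq] at h2
    -- FTC for the energy
    have hE : ∫ s in (0:ℝ)..t, ‖G s‖ ^ 2
        = ε * F (ε⁻¹ • Y t) - ε * F (ε⁻¹ • p) := by
      have h2 := intervalIntegral.integral_eq_sub_of_hasDerivAt
        (f := fun u => ε * F (ε⁻¹ • Y u)) (f' := fun s => ‖G s‖ ^ 2)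
        (fun s hs => hφd s (hsub hs))
        (by
          apply ContinuousOn.intervalIntegrable
          exact (hGc.mono hsub).norm.pow 2)
      rw [h2]
      show ε * F (ε⁻¹ • Y t) - ε * F (ε⁻¹ • X ε 0) = _
      rw [hXinit ε hε]
    -- FTC for the position
    have hpos : Y t - p = ∫ s in (0:ℝ)..t, G s := by
      have h2 := intervalIntegral.integral_eq_sub_of_hasDerivAt
        (f := Y) (f' := G) (fun s hs => hYd s (hsub hs))
        (by apply ContinuousOn.intervalIntegrable; exact hGc.mono hsub)
      rw [h2]
      show Y t - p = _
      rw [show Y 0 = p from hXinit ε hε]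
    set r := ‖X ε t - p‖ with hr
    have hr0 : 0 ≤ r := norm_nonneg _
    have h1 : r ≤ ∫ s in (0:ℝ)..t, ‖G s‖ := by
      rw [hr, show X ε t - p = Y t - p from rfl, hpos]
      exact intervalIntegral.norm_integral_le_integral_norm ht.1
    have h2 : (∫ s in (0:ℝ)..t, ‖G s‖) ^ 2 ≤ t * ∫ s in (0:ℝ)..t, ‖G s‖ ^ 2 :=
      cs_aux ht.1 ((hGc.mono (by rw [← uIcc_of_le ht.1]; exact hsub)).norm)
        (fun s _ => norm_nonneg _)
    have hInonneg : 0 ≤ ∫ s in (0:ℝ)..t, ‖G s‖ :=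
      intervalIntegral.integral_nonneg ht.1 (fun u _ => norm_nonneg _)
    have h3 : r ^ 2 ≤ t * ∫ s in (0:ℝ)..t, ‖G s‖ ^ 2 := by
      calc r ^ 2 ≤ (∫ s in (0:ℝ)..t, ‖G s‖) ^ 2 := by nlinarith
        _ ≤ _ := h2
    rw [hE] at h3
    -- bound the right-hand side using the sublinear potential bound
    have hFb : ∀ y : EuclideanSpace ℝ (Fin d),
        ε * |F (ε⁻¹ • y)| ≤ ε ^ (1 - a) * ‖y‖ ^ a := by
      intro y
      have h4 : |F (ε⁻¹ • y)| ≤ (ε⁻¹ * ‖y‖) ^ a := by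
        have := hFsub (ε⁻¹ • y)
        rwa [norm_smul, Real.norm_eq_abs, abs_of_pos (inv_pos.mpr hε0)] at this
      have h5 : (ε⁻¹ * ‖y‖) ^ a = ε⁻¹ ^ a * ‖y‖ ^ a :=
        Real.mul_rpow (inv_nonneg.mpr hε0.le) (norm_nonneg _)
      have h6 : ε * ε⁻¹ ^ a = ε ^ (1 - a) := by
        rw [Real.inv_rpow hε0.le, ← Real.rpow_neg hε0.le,
          show (1 - a) = 1 + -a by ring, Real.rpow_add hε0, Real.rpow_one]
      calc ε * |F (ε⁻¹ • y)| ≤ ε * (ε⁻¹ ^ a * ‖y‖ ^ a) := by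
            apply mul_le_mul_of_nonneg_left _ hε0.le
            rw [← h5]; exact h4
        _ = ε ^ (1 - a) * ‖y‖ ^ a := by rw [← mul_assoc, h6]
    have hYt : ‖Y t‖ ^ a ≤ (‖p‖ + r) ^ a := by
      apply Real.rpow_le_rpow (norm_nonneg _) _ ha0.le
      calc ‖Y t‖ = ‖p + (X ε t - p)‖ := by
            congr 1
            show X ε t = p + (X ε t - p)
            abel
        _ ≤ ‖p‖ + r := norm_add_le _ _
    have hεa : 0 < ε ^ (1 - a) := Real.rpow_pos_of_pos hε0 _
    have b1 := hFb (Y t)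
    have b2 := hFb p
    have a1 : ε * F (ε⁻¹ • Y t) ≤ ε * |F (ε⁻¹ • Y t)| :=
      mul_le_mul_of_nonneg_left (le_abs_self _) hε0.le
    have a2 : -(ε * F (ε⁻¹ • p)) ≤ ε * |F (ε⁻¹ • p)| := by
      rw [← mul_neg]; exact mul_le_mul_of_nonneg_left (neg_le_abs _) hε0.le
    have hpa : 0 ≤ ‖p‖ ^ a := Real.rpow_nonneg (norm_nonneg _) _
    have hQ : ε * F (ε⁻¹ • Y t) - ε * F (ε⁻¹ • p)
        ≤ ε ^ (1 - a) * ((‖p‖ + r) ^ a + ‖p‖ ^ a) := by nlinarith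
    have hQ0 : 0 ≤ ε ^ (1 - a) * ((‖p‖ + r) ^ a + ‖p‖ ^ a) := by
      apply mul_nonneg hεa.le
      have : 0 ≤ (‖p‖ + r) ^ a := Real.rpow_nonneg (by positivity) _
      linarith
    calc r ^ 2 ≤ t * (ε * F (ε⁻¹ • Y t) - ε * F (ε⁻¹ • p)) := h3
      _ ≤ t * (ε ^ (1 - a) * ((‖p‖ + r) ^ a + ‖p‖ ^ a)) :=
          mul_le_mul_of_nonneg_left hQ ht.1
      _ ≤ T * (ε ^ (1 - a) * ((‖p‖ + r) ^ a + ‖p‖ ^ a)) :=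
          mul_le_mul_of_nonneg_right ht.2 hQ0
      _ = T * ε ^ (1 - a) * ((‖p‖ + r) ^ a + ‖p‖ ^ a) := by ring
  -- Step 1: an a-priori bound independent of ε
  set R : ℝ := T + T * (2 * ‖p‖ + 2) + 1 with hRdef
  have hR1 : 1 ≤ R := by nlinarith [norm_nonneg p]
  have hstep1 : ∀ ε ∈ Ioc (0:ℝ) 1, ∀ t ∈ Icc (0:ℝ) T, ‖X ε t - p‖ ≤ R := by
    intro ε hε t ht
    set r := ‖X ε t - p‖ with hr
    have hr0 : 0 ≤ r := norm_nonneg _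
    have hk := key ε hε t ht
    have hεle : ε ^ (1 - a) ≤ 1 := Real.rpow_le_one hε.1.le hε.2 (by linarith)
    have hεpos : 0 < ε ^ (1 - a) := Real.rpow_pos_of_pos hε.1 _
    have e1 : (‖p‖ + r) ^ a ≤ ‖p‖ + r + 1 :=
      rpow_le_add_one (by positivity) ha0.le ha1.le
    have e2 : ‖p‖ ^ a ≤ ‖p‖ + 1 := rpow_le_add_one (norm_nonneg _) ha0.le ha1.le
    have hsum0 : 0 ≤ (‖p‖ + r) ^ a + ‖p‖ ^ a := by
      have h1 : 0 ≤ (‖p‖ + r) ^ a := Real.rpow_nonneg (by positivity) _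
      have h2 : 0 ≤ ‖p‖ ^ a := Real.rpow_nonneg (norm_nonneg _) _
      linarith
    have h8 : r ^ 2 ≤ T * (r + 2 * ‖p‖ + 2) := by
      have h9 : T * ε ^ (1 - a) * ((‖p‖ + r) ^ a + ‖p‖ ^ a)
          ≤ T * ((‖p‖ + r) ^ a + ‖p‖ ^ a) := by nlinarith
      nlinarith
    by_contra hcon
    push_neg at hcon
    have hB : 0 ≤ T * (2 * ‖p‖ + 2) := by positivity
    nlinarith [mul_pos (show (0:ℝ) < r - R by linarith)
        (show (0:ℝ) < r by linarith),
      mul_nonneg hB (show (0:ℝ) ≤ r - 1 by linarith)]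
  -- Step 2: the sharp bound
  set q : ℝ := (1 - a) / 2 with hq
  have hq0 : 0 < q := by rw [hq]; linarith
  set K : ℝ := (‖p‖ + R) ^ a + ‖p‖ ^ a with hKdef
  have hK0 : 0 ≤ K := by
    have h1 : 0 ≤ (‖p‖ + R) ^ a := Real.rpow_nonneg (by positivity) _
    have h2 : 0 ≤ ‖p‖ ^ a := Real.rpow_nonneg (norm_nonneg _) _
    rw [hKdef]; linarith
  set C : ℝ := Real.sqrt (T * K) + 1 with hCdef
  have hC0 : 0 < C := by positivity
  have main : ∀ ε ∈ Ioc (0:ℝ) 1, ∀ t ∈ Icc (0:ℝ) T,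
      ‖X ε t - p‖ ≤ C * ε ^ q := by
    intro ε hε t ht
    set r := ‖X ε t - p‖ with hr
    have hr0 : 0 ≤ r := norm_nonneg _
    have hk := key ε hε t ht
    have hRr := hstep1 ε hε t ht
    have hεpos : 0 < ε ^ (1 - a) := Real.rpow_pos_of_pos hε.1 _
    have e3 : (‖p‖ + r) ^ a ≤ (‖p‖ + R) ^ a :=
      Real.rpow_le_rpow (by positivity) (by linarith) ha0.le
    have hεq : 0 ≤ ε ^ q := (Real.rpow_pos_of_pos hε.1 _).le
    have hsq : (ε ^ q) ^ 2 = ε ^ (1 - a) := by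
      rw [← Real.rpow_natCast (ε ^ q) 2, ← Real.rpow_mul hε.1.le]
      norm_num [hq]
    have h9 : r ^ 2 ≤ T * K * (ε ^ q) ^ 2 := by
      rw [hsq]
      calc r ^ 2 ≤ T * ε ^ (1 - a) * ((‖p‖ + r) ^ a + ‖p‖ ^ a) := hk
        _ ≤ T * ε ^ (1 - a) * K := by
            apply mul_le_mul_of_nonneg_left _ (by positivity)
            rw [hKdef]; linarith
        _ = T * K * ε ^ (1 - a) := by ring
    have h10 : r ≤ Real.sqrt (T * K) * ε ^ q := by
      calc r = Real.sqrt (r ^ 2) := (Real.sqrt_sq hr0).symm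
        _ ≤ Real.sqrt (T * K * (ε ^ q) ^ 2) := Real.sqrt_le_sqrt h9
        _ = Real.sqrt (T * K) * ε ^ q := by
            rw [Real.sqrt_mul (by positivity), Real.sqrt_sq hεq]
    calc r ≤ Real.sqrt (T * K) * ε ^ q := h10
      _ ≤ C * ε ^ q := mul_le_mul_of_nonneg_right (by rw [hCdef]; linarith) hεq
  refine ⟨⟨C, hC0, main⟩, ?_⟩
  rw [Metric.tendstoUniformlyOn_iff]
  intro η hη
  have hcont : ContinuousAt (fun x : ℝ => x ^ q) 0 :=
    Real.continuousAt_rpow_const 0 q (Or.inr hq0.le)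
  have h0 : Tendsto (fun x : ℝ => C * x ^ q) (nhds 0) (nhds 0) := by
    have h1 : Tendsto (fun x : ℝ => x ^ q) (nhds 0) (nhds ((0:ℝ) ^ q)) :=
      hcont.tendsto
    rw [Real.zero_rpow hq0.ne'] at h1
    have h2 := h1.const_mul C
    rw [mul_zero] at h2
    exact h2
  have h1 : ∀ᶠ x in nhdsWithin (0:ℝ) (Ioc 0 1), C * x ^ q < η :=
    (h0.mono_left nhdsWithin_le_nhds).eventually_lt_const hη
  filter_upwards [h1, self_mem_nhdsWithin] with ε hε1 hε2
  intro t ht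
  rw [dist_comm, dist_eq_norm]
  exact lt_of_le_of_lt (main ε hε2 t ht) hε1
end
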